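/- arXiv:1005.1754 — 3 statements merged into one kernel-verified Lean document; each statement's English description precedes it below -/
import Mathlib

section
/- Let R be a Noetherian commutative ring, X a saturated subset of Spec R, and M an Artinian R-module. Then an element x ∈ R is an M-filter co-regular element with respect to X (i.e., Cos_R(M/xM) ⊆ X) if and only if x lies outside the union of the primes in Att_R M − X, i.e., x ∈ R − ⋃_{p ∈ Att_R M − X} p. -/
open CategoryTheory

universe u

noncomputable section

variable (R : Type u) [CommRing R]

/-- The co-support of a module `M`: the set of primes `p` of `R` such that the
co-localization `Hom_R(R_p, M)` is nonzero. -/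
def cosupport (M : Type u) [AddCommGroup M] [Module R M] : Set (PrimeSpectrum R) :=
  { p | ∃ f : Localization.AtPrime p.asIdeal →ₗ[R] M, f ≠ 0 }

/-- A saturated subset of `Spec R`: if `p ∈ X` then `V(p) ⊆ X`.
(The empty set vacuously satisfies this.) -/
def IsSaturatedSet (X : Set (PrimeSpectrum R)) : Prop :=
  ∀ p ∈ X, ∀ q : PrimeSpectrum R, p.asIdeal ≤ q.asIdeal → q ∈ X

/-- The `S`-module structure on the co-localization `Hom_R(S, M)`, given by
multiplication in the domain: `(s • f) t = f (s * t)`. -/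
instance colocModule (S : Type u) [CommRing S] [Algebra R S]
    (M : Type u) [AddCommGroup M] [Module R M] : Module S (S →ₗ[R] M) where
  smul s f := f.comp (LinearMap.mulLeft R s)
  one_smul f := by ext x; show f (1 * x) = f x; rw [one_mul]
  mul_smul s t f := by ext x; show f ((s * t) * x) = f (t * (s * x)); rw [mul_assoc, mul_left_comm]
  smul_zero s := by ext x; show (0 : S →ₗ[R] M) (s * x) = (0 : S →ₗ[R] M) x; simp
  smul_add s f g := by ext x; show (f + g) (s * x) = f (s * x) + g (s * x); simp
  add_smul s t f := by ext x; show f ((s + t) * x) = f (s * x) + f (t * x); rw [add_mul, map_add]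
  zero_smul f := by ext x; show f (0 * x) = (0 : S →ₗ[R] M) x; simp

/-- `Tor_n^A(N, M)` as an object of `ModuleCat A`. -/
def TorMod (A : Type u) [CommRing A] (n : ℕ) (N M : Type u)
    [AddCommGroup N] [Module A N] [AddCommGroup M] [Module A M] : ModuleCat A :=
  ((Tor (ModuleCat.{u} A) n).obj (ModuleCat.of A N)).obj (ModuleCat.of A M)

/-- The residue field `k(p) = R_p / p R_p`. -/
def ResField (p : Ideal R) [p.IsPrime] : Type u :=
  Localization.AtPrime p ⧸ (p.map (algebraMap R (Localization.AtPrime p)))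

instance (p : Ideal R) [p.IsPrime] : AddCommGroup (ResField R p) :=
  inferInstanceAs (AddCommGroup
    (Localization.AtPrime p ⧸ (p.map (algebraMap R (Localization.AtPrime p)))))

instance (p : Ideal R) [p.IsPrime] : Module (Localization.AtPrime p) (ResField R p) :=
  inferInstanceAs (Module (Localization.AtPrime p)
    (Localization.AtPrime p ⧸ (p.map (algebraMap R (Localization.AtPrime p)))))

/-- The `i`-th dual Bass number of `M` at `p` is positive, i.e.
`π_i(p, M) = dim_{k(p)} Tor_i^{R_p}(k(p), Hom_R(R_p, M)) > 0`. -/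
def DualBassPos (p : Ideal R) [p.IsPrime] (M : Type u) [AddCommGroup M] [Module R M]
    (i : ℕ) : Prop :=
  Nontrivial (TorMod (Localization.AtPrime p) i (ResField R p)
    (Localization.AtPrime p →ₗ[R] M))

/-- `Cograde_{R_p}(I, Hom_R(R_p, M)) = inf { i | Tor_i^{R_p}(R_p/I, Hom_R(R_p, M)) ≠ 0 }`. -/
def cogradeLoc (p : Ideal R) [p.IsPrime] (I : Ideal (Localization.AtPrime p))
    (M : Type u) [AddCommGroup M] [Module R M] : ℕ∞ :=
  sInf { n : ℕ∞ | ∃ i : ℕ, n = i ∧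
    Nontrivial (TorMod (Localization.AtPrime p) i (Localization.AtPrime p ⧸ I)
      (Localization.AtPrime p →ₗ[R] M)) }

/-- `Cograde_{R_p} Hom_R(R_p, M)`, the cograde with respect to `p R_p`. -/
def cogradeP (p : Ideal R) [p.IsPrime] (M : Type u) [AddCommGroup M] [Module R M] : ℕ∞ :=
  cogradeLoc R p (p.map (algebraMap R (Localization.AtPrime p))) M

/-- `Cograde_X(I, M) = inf { i | Cos_R(Tor_i^R(R/I, M)) ⊄ X }`. -/
def cogradeX (X : Set (PrimeSpectrum R)) (I : Ideal R)
    (M : Type u) [AddCommGroup M] [Module R M] : ℕ∞ :=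
  sInf { n : ℕ∞ | ∃ i : ℕ, n = i ∧ ¬ (cosupport R (TorMod R i (R ⧸ I) M) ⊆ X) }

/-- The flat dimension of an `A`-module `M`: the least `n` such that `Tor_i^A(N, M) = 0`
for all `i > n` and all `A`-modules `N` (and `∞` if there is no such `n`). -/
def flatDim (A : Type u) [CommRing A] (M : Type u) [AddCommGroup M] [Module A M] : ℕ∞ :=
  sInf { n : ℕ∞ | ∀ i : ℕ, n < (i : ℕ∞) →
    ∀ (N : Type u) (_ : AddCommGroup N) (_ : Module A N), Subsingleton (TorMod A i N M) }

/-- `x` is an `M`-filter co-regular sequence with respect to `X`: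
for each `i`, `Cos_R((0 :_M (x_0,…,x_{i-1})) / x_i (0 :_M (x_0,…,x_{i-1}))) ⊆ X`. -/
def IsFilterCoregSeq (X : Set (PrimeSpectrum R)) (M : Type u) [AddCommGroup M] [Module R M]
    {n : ℕ} (x : Fin n → R) : Prop :=
  ∀ i : Fin n,
    cosupport R
      ((Submodule.torsionBySet R M (x '' { j | j < i })) ⧸
        (Ideal.span {x i} •
          (⊤ : Submodule R (Submodule.torsionBySet R M (x '' { j | j < i }))))) ⊆ X

/-- `y` is an `N`-quasi co-regular sequence: multiplication by `y i` is a surjective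
endomorphism of `(0 :_N (y_0,…,y_{i-1}))` for each `i`. -/
def IsQuasiCoregSeq (S : Type u) [CommRing S] (N : Type u) [AddCommGroup N] [Module S N]
    {n : ℕ} (y : Fin n → S) : Prop :=
  ∀ i : Fin n, ∀ m ∈ Submodule.torsionBySet S N (y '' { j | j < i }),
    ∃ m' ∈ Submodule.torsionBySet S N (y '' { j | j < i }), y i • m' = m

/-- A submodule `N` of `M` is `p`-secondary: `N ≠ 0`, every `x : R` acts on `N` either
surjectively or nilpotently, and `p = √(Ann_R N)`. -/
def IsSecondary (p : Ideal R) {M : Type u} [AddCommGroup M] [Module R M]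
    (N : Submodule R M) : Prop :=
  N ≠ ⊥ ∧
  (∀ x : R, (∀ m ∈ N, ∃ m' ∈ N, x • m' = m) ∨ (∃ k : ℕ, ∀ m ∈ N, x ^ k • m = 0)) ∧
  p = N.annihilator.radical

/-- The attached primes of `M`: primes occurring in a minimal secondary representation
`M = N_1 + ⋯ + N_k` (the `N_i` being `q_i`-secondary with distinct `q_i`, no `N_i`
redundant). -/
def attachedPrimes (M : Type u) [AddCommGroup M] [Module R M] : Set (PrimeSpectrum R) :=
  { p | ∃ (k : ℕ) (N : Fin k → Submodule R M) (q : Fin k → Ideal R),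
      (⨆ i, N i) = ⊤ ∧ (∀ i, IsSecondary R (q i) (N i)) ∧ Function.Injective q ∧
      (∀ i : Fin k, (⨆ j ∈ { j | j ≠ i }, N j) ≠ ⊤) ∧ (∃ i, q i = p.asIdeal) }

/-- `Co-dim_{R_p} Hom_R(R_p, M) = sup { dim R_p/(q R_p) | q ∈ Cos_R M, q ⊆ p }`. -/
def colocCodim (p : Ideal R) [p.IsPrime] (M : Type u) [AddCommGroup M] [Module R M] :
    WithBot ℕ∞ :=
  sSup { d | ∃ q ∈ cosupport R M, q.asIdeal ≤ p ∧
    d = ringKrullDim ((Localization.AtPrime p) ⧸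
      (q.asIdeal.map (algebraMap R (Localization.AtPrime p)))) }

/-- `Co-dim_R M = sup { dim R/p | p ∈ Cos_R M }`. -/
def coDim (M : Type u) [AddCommGroup M] [Module R M] : WithBot ℕ∞ :=
  sSup { d | ∃ p ∈ cosupport R M, d = ringKrullDim (R ⧸ p.asIdeal) }

/-- A `U` ring: a Noetherian commutative ring such that for every Artinian module `M`
and every prime `p ⊇ Ann_R M`, one has `Ann_R(0 :_M p) = p`. -/
def IsURing : Prop :=
  IsNoetherianRing R ∧
  ∀ (M : Type u) (_ : AddCommGroup M) (_ : Module R M), IsArtinian R M →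
    ∀ p : Ideal R, p.IsPrime → (⊤ : Submodule R M).annihilator ≤ p →
      (Submodule.torsionBySet R M (p : Set R)).annihilator = p

/-- `ht(p/q)`: the supremum of lengths of chains of primes from `q` up to `p`. -/
def relHeight (q p : Ideal R) : ℕ∞ :=
  sSup { n : ℕ∞ | ∃ m : ℕ, n = m ∧ ∃ c : Fin (m + 1) → PrimeSpectrum R,
    StrictMono c ∧ (c 0).asIdeal = q ∧ (c (Fin.last m)).asIdeal = p }

/-- `M` is a cotorsion module: `Ext^1_R(F, M) = 0` for every flat module `F`. -/
def IsCotorsion (M : Type u) [AddCommGroup M] [Module R M] : Prop :=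
  ∀ (G : Type u) (_ : AddCommGroup G) (_ : Module R G), Module.Flat R G →
    Subsingleton (((Ext R (ModuleCat.{u} R) 1).obj
      (Opposite.op (ModuleCat.of R G))).obj (ModuleCat.of R M))

end

section Coset
section Coset
variable (R : Type u) {N : Type u} [CommRing R] [AddCommGroup N] [Module R N]

/-- `A` is a coset of a submodule. -/
def IsCoset (A : Set N) : Prop := ∃ (x : N) (U : Submodule R N), A = {y | y - x ∈ U}

variable {R}

lemma IsCoset.nonempty {A : Set N} (h : IsCoset R A) : A.Nonempty := by
  obtain ⟨x, U, rfl⟩ := h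
  exact ⟨x, by simp⟩

lemma coset_dir_le {x x' : N} {U U' : Submodule R N}
    (h : {y | y - x ∈ U} ⊆ {y | y - x' ∈ U'}) : U ≤ U' := by
  intro u hu
  have h1 : x + u ∈ {y | y - x' ∈ U'} := h (by simpa using hu)
  have h2 : x ∈ {y | y - x' ∈ U'} := h (by simp)
  have := U'.sub_mem h1 h2
  simpa using this

lemma coset_eq_of_subset {x x' : N} {U : Submodule R N}
    (h : {y | y - x ∈ U} ⊆ {y | y - x' ∈ U}) : {y | y - x ∈ U} = {y | y - x' ∈ U} := by
  refine Set.Subset.antisymm h ?_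
  have h2 : x - x' ∈ U := h (by simp)
  intro y hy
  have : y - x' ∈ U := hy
  simpa using U.sub_mem this h2

lemma IsCoset.image {A : Set N} (h : IsCoset R A) (f : N →ₗ[R] N) : IsCoset R (f '' A) := by
  obtain ⟨x, U, rfl⟩ := h
  refine ⟨f x, U.map f, ?_⟩
  ext z
  constructor
  · rintro ⟨y, hy, rfl⟩
    exact ⟨y - x, hy, by simp⟩
  · rintro ⟨u, hu, hz⟩
    refine ⟨u + x, by simpa using hu, ?_⟩
    rw [map_add, hz]
    abel

lemma IsCoset.inter {A B : Set N} (hA : IsCoset R A) (hB : IsCoset R B)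
    (hne : (A ∩ B).Nonempty) : IsCoset R (A ∩ B) := by
  obtain ⟨x, U, rfl⟩ := hA
  obtain ⟨x', U', rfl⟩ := hB
  obtain ⟨z, hz1, hz2⟩ := hne
  refine ⟨z, U ⊓ U', ?_⟩
  ext y
  simp only [Set.mem_inter_iff, Set.mem_setOf_eq, Submodule.mem_inf]
  constructor
  · rintro ⟨h1, h2⟩
    exact ⟨by simpa using U.sub_mem h1 hz1, by simpa using U'.sub_mem h2 hz2⟩
  · rintro ⟨h1, h2⟩
    exact ⟨by simpa using U.add_mem h1 hz1, by simpa using U'.add_mem h2 hz2⟩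

/-- singleton preimage under a linear map, when nonempty, is a coset -/
lemma isCoset_preimage_singleton (f : N →ₗ[R] N) (x : N) (hne : (f ⁻¹' {x}).Nonempty) :
    IsCoset R (f ⁻¹' {x}) := by
  obtain ⟨z, hz⟩ := hne
  refine ⟨z, LinearMap.ker f, ?_⟩
  ext y
  simp only [Set.mem_preimage, Set.mem_singleton_iff, Set.mem_setOf_eq, LinearMap.mem_ker,
    map_sub]
  simp only [Set.mem_preimage, Set.mem_singleton_iff] at hz
  constructor
  · intro h; rw [h, hz, sub_self]
  · intro h; have := sub_eq_zero.mp h; rw [this, hz]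

/-- a downward-directed nonempty family of cosets in an Artinian module has a minimum. -/
lemma exists_min_coset [IsArtinian R N] {ι : Type u} [Nonempty ι] (A : ι → Set N)
    (hc : ∀ i, IsCoset R (A i))
    (hdir : ∀ i j, ∃ k, A k ⊆ A i ∩ A j) : ∃ i₀, ∀ i, A i₀ ⊆ A i := by
  choose x U hU using hc
  obtain ⟨V, ⟨i₀, rfl⟩, hmin⟩ := IsArtinian.set_has_minimal (Set.range U) ⟨U Classical.ofNonempty, Set.mem_range_self _⟩
  refine ⟨i₀, fun i => ?_⟩
  obtain ⟨k, hk⟩ := hdir i₀ i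
  have hk0 : A k ⊆ A i₀ := fun y hy => (hk hy).1
  have hk1 : A k ⊆ A i := fun y hy => (hk hy).2
  have hUle : U k ≤ U i₀ := by
    rw [hU k, hU i₀] at hk0; exact coset_dir_le hk0
  have hUeq : U k = U i₀ := by
    by_contra hne
    exact hmin (U k) (Set.mem_range_self _) (lt_of_le_of_ne hUle hne)
  have : A k = A i₀ := by
    rw [hU k, hU i₀] at hk0 ⊢
    rw [hUeq] at hk0 ⊢
    exact coset_eq_of_subset hk0
  rw [← this]; exact hk1

end Coset
section Compat
variable {R : Type u} {N : Type u} [CommRing R] [AddCommGroup N] [Module R N]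

variable (R) in
/-- image of a set under scalar multiplication -/
def smImg (r : R) (A : Set N) : Set N := (fun n => r • n) '' A

lemma smImg_isCoset {A : Set N} (h : IsCoset R A) (r : R) : IsCoset R (smImg R r A) := by
  have := h.image (LinearMap.lsmul R N r)
  exact this

lemma smImg_mono {A B : Set N} (h : A ⊆ B) (r : R) : smImg R r A ⊆ smImg R r B :=
  Set.image_mono h

lemma smImg_mul (r s : R) (A : Set N) : smImg R (r * s) A = smImg R r (smImg R s A) := by
  simp only [smImg, ← Set.image_comp]
  ext n
  simp [mul_smul]

lemma smImg_one (A : Set N) : smImg R (1 : R) A = A := by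
  simp [smImg]

theorem exists_compatible_family [IsArtinian R N] {Λ : Type u} [AddCommMonoid Λ]
    (P : Λ → R) (hP0 : P 0 = 1) (hPadd : ∀ a b, P (a + b) = P a * P b)
    (hsurj : ∀ a, Function.Surjective (fun n : N => P a • n)) (n₀ : N) :
    ∃ g : Λ → N, (∀ a, P a • g a = n₀) ∧ ∀ a b, P b • g (a + b) = g a := by
  classical
  -- fibers
  let fib : Set (Λ × N) → Λ → Set N := fun T a => {n | (a, n) ∈ T}
  let B0 : Λ → Set N := fun a => {n | P a • n = n₀}
  let 𝒮 : Set (Set (Λ × N)) := {T | (∀ a, IsCoset R (fib T a)) ∧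
    (∀ a b, smImg R (P b) (fib T (a + b)) ⊆ fib T a) ∧ (∀ a, fib T a ⊆ B0 a)}
  have hB0coset : ∀ a, IsCoset R (B0 a) := by
    intro a
    have hne : ((LinearMap.lsmul R N (P a)) ⁻¹' {n₀}).Nonempty := by
      obtain ⟨n, hn⟩ := hsurj a n₀
      exact ⟨n, by simpa using hn⟩
    exact isCoset_preimage_singleton (LinearMap.lsmul R N (P a)) n₀ hne
  have hT0 : {q : Λ × N | P q.1 • q.2 = n₀} ∈ 𝒮 := by
    refine ⟨fun a => hB0coset a, ?_, fun a n hn => hn⟩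
    rintro a b _ ⟨n, hn, rfl⟩
    show P a • P b • n = n₀
    rw [← mul_smul, ← hPadd]
    exact hn
  -- Zorn
  have hzorn : ∀ c ⊆ 𝒮, IsChain (· ⊆ ·) c → c.Nonempty →
      ∃ lb ∈ 𝒮, ∀ s ∈ c, lb ⊆ s := by
    intro c hc hchain hcne
    refine ⟨⋂₀ c, ⟨?_, ?_, ?_⟩, fun s hs => Set.sInter_subset_of_mem hs⟩
    · -- each fiber a coset
      intro a
      have : Nonempty c := hcne.to_subtype
      have heq : fib (⋂₀ c) a = ⋂ (T : c), fib (T : Set (Λ × N)) a := by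
        ext n; simp [fib, Set.mem_sInter]
      have hdir : ∀ i j : c, ∃ k : c, fib (k : Set (Λ × N)) a ⊆
          fib (i : Set (Λ × N)) a ∩ fib (j : Set (Λ × N)) a := by
        intro i j
        rcases hchain.total i.2 j.2 with h | h
        · exact ⟨i, fun y hy => ⟨hy, h hy⟩⟩
        · exact ⟨j, fun y hy => ⟨h hy, hy⟩⟩
      obtain ⟨i₀, hi₀⟩ := exists_min_coset (fun T : c => fib (T : Set (Λ × N)) a)
        (fun T => (hc T.2).1 a) hdir
      have : fib (⋂₀ c) a = fib (i₀ : Set (Λ × N)) a := by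
        rw [heq]
        refine Set.Subset.antisymm (Set.iInter_subset _ i₀) (Set.subset_iInter hi₀)
      rw [this]
      exact (hc i₀.2).1 a
    · intro a b
      rintro _ ⟨n, hn, rfl⟩
      intro s hs
      exact (hc hs).2.1 a b ⟨n, hn s hs, rfl⟩
    · intro a n hn
      obtain ⟨s, hs⟩ := hcne
      exact (hc hs).2.2 a (hn s hs)
  obtain ⟨T, hTsub, hTmin⟩ := zorn_superset_nonempty 𝒮 hzorn _ hT0
  obtain ⟨hTcoset, hTcompat, hTref⟩ := hTmin.prop
  -- step (i) : fib T a ⊆ smImg (P b) (fib T (a+b))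
  have hstep1 : ∀ a b, fib T a ⊆ smImg R (P b) (fib T (a + b)) := by
    have hFmono : ∀ a b c, smImg R (P (b + c)) (fib T (a + (b + c)))
        ⊆ smImg R (P b) (fib T (a + b)) := by
      intro a b c
      rw [hPadd, smImg_mul, ← add_assoc]
      exact smImg_mono (hTcompat (a + b) c) _
    set T1 : Set (Λ × N) := {q | ∀ b, q.2 ∈ smImg R (P b) (fib T (q.1 + b))} with hT1def
    have hfib1 : ∀ a, fib T1 a = ⋂ b, smImg R (P b) (fib T (a + b)) := by
      intro a; ext n; simp [fib, hT1def]
    have hT1subT : T1 ⊆ T := by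
      rintro ⟨a, n⟩ hn
      have := hn 0
      rw [hP0, add_zero, smImg_one] at this
      exact this
    have hT1mem : T1 ∈ 𝒮 := by
      refine ⟨?_, ?_, ?_⟩
      · intro a
        have hdir : ∀ b₁ b₂ : Λ, ∃ k : Λ, smImg R (P k) (fib T (a + k)) ⊆
            smImg R (P b₁) (fib T (a + b₁)) ∩ smImg R (P b₂) (fib T (a + b₂)) := by
          intro b₁ b₂
          refine ⟨b₁ + b₂, fun y hy => ⟨hFmono a b₁ b₂ hy, ?_⟩⟩
          rw [add_comm b₁ b₂] at hy
          exact hFmono a b₂ b₁ hy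
        obtain ⟨i₀, hi₀⟩ := exists_min_coset (fun b => smImg R (P b) (fib T (a + b)))
          (fun b => smImg_isCoset (hTcoset _) _) hdir
        have : fib T1 a = smImg R (P i₀) (fib T (a + i₀)) := by
          rw [hfib1]
          exact Set.Subset.antisymm (Set.iInter_subset _ i₀) (Set.subset_iInter hi₀)
        rw [this]; exact smImg_isCoset (hTcoset _) _
      · intro a b
        rintro _ ⟨n, hn, rfl⟩
        show ∀ c, P b • n ∈ smImg R (P c) (fib T (a + c))
        intro c
        have hn' : n ∈ smImg R (P c) (fib T ((a + b) + c)) := by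
          have := (hfib1 (a + b)) ▸ hn
          exact Set.mem_iInter.mp this c
        have : P b • n ∈ smImg R (P b) (smImg R (P c) (fib T ((a + b) + c))) :=
          ⟨n, hn', rfl⟩
        rw [← smImg_mul, ← hPadd] at this
        have h2 : smImg R (P (b + c)) (fib T ((a + b) + c)) ⊆ smImg R (P c) (fib T (a + c)) := by
          rw [hPadd, mul_comm, smImg_mul]
          have : (a + b) + c = (a + c) + b := by abel
          rw [this]
          exact smImg_mono (hTcompat (a + c) b) _
        exact h2 this
      · intro a n hn
        exact hTref a (hT1subT hn)
    have hTT1 : T ⊆ T1 := hTmin.2 hT1mem hT1subT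
    intro a b n hn
    exact (hTT1 hn) b
  -- step (ii) : every fiber is a singleton
  have hsing : ∀ a, ∃ z, fib T a = {z} := by
    intro a₀
    obtain ⟨x, hx⟩ := (hTcoset a₀).nonempty
    refine ⟨x, Set.Subset.antisymm ?_ (by simpa [Set.singleton_subset_iff] using hx)⟩
    -- the D system
    set D : Λ → Set N := fun m => fib T (a₀ + m) ∩ {y | P m • y = x} with hDdef
    have hDne : ∀ m, (D m).Nonempty := by
      intro m
      obtain ⟨y, hy, hyx⟩ := hstep1 a₀ m hx
      exact ⟨y, hy, hyx⟩
    have hDcoset : ∀ m, IsCoset R (D m) := by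
      intro m
      refine (hTcoset _).inter ?_ (hDne m)
      have hne : ((LinearMap.lsmul R N (P m)) ⁻¹' {x}).Nonempty := by
        obtain ⟨y, hy1, hy2⟩ := hDne m
        exact ⟨y, by simpa using hy2⟩
      have := isCoset_preimage_singleton (LinearMap.lsmul R N (P m)) x hne
      convert this using 1
      ext y; simp
    have hDcompat : ∀ m c, smImg R (P c) (D (m + c)) ⊆ D m := by
      intro m c
      rintro _ ⟨y, ⟨hy1, hy2⟩, rfl⟩
      constructor
      · have : a₀ + (m + c) = (a₀ + m) + c := by abel
        rw [this] at hy1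
        exact hTcompat (a₀ + m) c ⟨y, hy1, rfl⟩
      · show P m • P c • y = x
        rw [← mul_smul, ← hPadd]
        exact hy2
    set G : Λ → Λ → Set N := fun a r => smImg R (P (a₀ + r)) (D (a + r)) with hGdef
    have hGmono : ∀ a r c, G a (r + c) ⊆ G a r := by
      intro a r c
      show smImg R (P (a₀ + (r + c))) (D (a + (r + c))) ⊆ _
      have h1 : a₀ + (r + c) = (a₀ + r) + c := by abel
      have h2 : a + (r + c) = (a + r) + c := by abel
      rw [h1, h2, hPadd, smImg_mul]
      exact smImg_mono (hDcompat (a + r) c) _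
    set T2 : Set (Λ × N) := {q | ∀ r, q.2 ∈ G q.1 r} with hT2def
    have hfib2 : ∀ a, fib T2 a = ⋂ r, G a r := by
      intro a; ext n; simp [fib, hT2def]
    have hT2subT : T2 ⊆ T := by
      rintro ⟨a, n⟩ hn
      have := hn 0
      rw [hGdef] at this
      simp only [add_zero] at this
      obtain ⟨y, hy, rfl⟩ := this
      exact hTcompat a a₀ ⟨y, by rw [add_comm]; exact hy.1, rfl⟩
    have hT2mem : T2 ∈ 𝒮 := by
      refine ⟨?_, ?_, ?_⟩
      · intro a
        have hdir : ∀ r₁ r₂ : Λ, ∃ k : Λ, G a k ⊆ G a r₁ ∩ G a r₂ := by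
          intro r₁ r₂
          refine ⟨r₁ + r₂, fun y hy => ⟨hGmono a r₁ r₂ hy, ?_⟩⟩
          rw [add_comm r₁ r₂] at hy
          exact hGmono a r₂ r₁ hy
        obtain ⟨i₀, hi₀⟩ := exists_min_coset (G a)
          (fun r => smImg_isCoset (hDcoset _) _) hdir
        have : fib T2 a = G a i₀ := by
          rw [hfib2]
          exact Set.Subset.antisymm (Set.iInter_subset _ i₀) (Set.subset_iInter hi₀)
        rw [this]; exact smImg_isCoset (hDcoset _) _
      · intro a b
        rintro _ ⟨n, hn, rfl⟩
        show ∀ r, P b • n ∈ G a r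
        intro r
        have hn' : n ∈ G (a + b) r := hn r
        have : P b • n ∈ smImg R (P b) (G (a + b) r) := ⟨n, hn', rfl⟩
        rw [hGdef] at this ⊢
        simp only at this ⊢
        rw [← smImg_mul, mul_comm, smImg_mul] at this
        have h2 : smImg R (P b) (D ((a + b) + r)) ⊆ D (a + r) := by
          have hh : (a + b) + r = (a + r) + b := by abel
          rw [hh]
          exact hDcompat (a + r) b
        exact smImg_mono h2 _ this
      · intro a n hn
        exact hTref a (hT2subT hn)
    have hTT2 : T ⊆ T2 := hTmin.2 hT2mem hT2subT
    intro x' hx'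
    have := (hTT2 hx') 0
    rw [hGdef] at this
    simp only [add_zero] at this
    obtain ⟨y, hy, rfl⟩ := this
    exact hy.2
  choose g hg using hsing
  refine ⟨g, ?_, ?_⟩
  · intro a
    have : g a ∈ fib T a := by rw [hg a]; rfl
    exact hTref a this
  · intro a b
    have h1 : g (a + b) ∈ fib T (a + b) := by rw [hg (a + b)]; rfl
    have h2 : P b • g (a + b) ∈ fib T a := hTcompat a b ⟨g (a + b), h1, rfl⟩
    rw [hg a] at h2
    exact h2

end Compat
section Hom
variable {R : Type u} {N : Type u} [CommRing R] [AddCommGroup N] [Module R N]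

theorem exists_nonzero_hom [IsArtinian R N] (p : Ideal R) [p.IsPrime]
    (hsurj : ∀ s : p.primeCompl, Function.Surjective (fun n : N => (s : R) • n))
    (n₀ : N) (hn₀ : n₀ ≠ 0) :
    ∃ f : Localization.AtPrime p →ₗ[R] N, f ≠ 0 := by
  classical
  set S := p.primeCompl with hSdef
  set P : (S →₀ ℕ) → R := fun lam => lam.prod fun s k => (s : R) ^ k with hPdef
  have hP0 : P 0 = 1 := Finsupp.prod_zero_index
  have hPadd : ∀ a b, P (a + b) = P a * P b := fun a b =>
    Finsupp.prod_add_index (fun s _ => pow_zero _) (fun s _ k l => pow_add _ _ _)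
  have hPmem : ∀ a, P a ∈ S := fun a =>
    Submonoid.prod_mem _ fun s _ => Submonoid.pow_mem _ s.2 _
  have hsurjP : ∀ a, Function.Surjective (fun n : N => P a • n) := fun a =>
    hsurj ⟨P a, hPmem a⟩
  obtain ⟨g, hgref, hgcompat⟩ := exists_compatible_family P hP0 hPadd hsurjP n₀
  set δ : S → (S →₀ ℕ) := fun s => Finsupp.single s 1 with hδdef
  have hPδ : ∀ s : S, P (δ s) = (s : R) := fun s => by
    have := Finsupp.prod_single_index (a := s) (b := (1 : ℕ))
      (h := fun (t : S) k => (t : R) ^ k) (pow_zero _)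
    rw [hPdef, hδdef]
    simp only [pow_one] at this
    exact this
  have hkey : ∀ lam mu, g lam = P mu • g (lam + mu) := fun lam mu => (hgcompat lam mu).symm
  -- the underlying function
  set F : Localization.AtPrime p → N := fun y =>
    Localization.liftOn y (fun r s => r • g (δ s)) (by
      intro a c b d hr
      rw [Localization.r_iff_exists] at hr
      obtain ⟨e, he⟩ := hr
      show a • g (δ b) = c • g (δ d)
      have h1 : a • g (δ b) = ((e : R) * (d : R) * a) • g (δ b + (δ e + δ d)) := by
        rw [hkey (δ b) (δ e + δ d), smul_smul, hPadd, hPδ, hPδ]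
        congr 1; ring
      have h2 : c • g (δ d) = ((e : R) * (b : R) * c) • g (δ d + (δ e + δ b)) := by
        rw [hkey (δ d) (δ e + δ b), smul_smul, hPadd, hPδ, hPδ]
        congr 1; ring
      rw [h1, h2]
      have harg : δ b + (δ e + δ d) = δ d + (δ e + δ b) := by abel
      rw [harg]
      congr 1
      calc (e : R) * d * a = (e : R) * ((d : R) * a) := by ring
        _ = (e : R) * ((b : R) * c) := he
        _ = (e : R) * b * c := by ring) with hFdef
  have hFmk : ∀ (r : R) (s : S), F (Localization.mk r s) = r • g (δ s) := fun r s => rfl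
  have hadd : ∀ y z, F (y + z) = F y + F z := by
    intro y z
    refine Localization.induction_on₂ y z ?_
    rintro ⟨a, s⟩ ⟨b, t⟩
    rw [Localization.add_mk, hFmk, hFmk, hFmk]
    set σ := δ (s * t) + (δ s + δ t) with hσdef
    have harg2 : δ s + (δ (s * t) + δ t) = σ := by rw [hσdef]; abel
    have harg3 : δ t + (δ (s * t) + δ s) = σ := by rw [hσdef]; abel
    have e1 : g (δ (s * t)) = ((s : R) * (t : R)) • g σ := by
      rw [hkey (δ (s * t)) (δ s + δ t), hPadd, hPδ, hPδ]
    have e2 : g (δ s) = (((s * t : S) : R) * (t : R)) • g σ := by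
      rw [hkey (δ s) (δ (s * t) + δ t), hPadd, hPδ, hPδ, harg2]
    have e3 : g (δ t) = (((s * t : S) : R) * (s : R)) • g σ := by
      rw [hkey (δ t) (δ (s * t) + δ s), hPadd, hPδ, hPδ, harg3]
    rw [e1, e2, e3, smul_smul, smul_smul, smul_smul, ← add_smul]
    congr 1
    push_cast
    ring
  have hsmul : ∀ (r : R) y, F (r • y) = r • F y := by
    intro r y
    refine Localization.induction_on y ?_
    rintro ⟨a, s⟩
    rw [Localization.smul_mk, hFmk, hFmk, smul_eq_mul, smul_smul]
  refine ⟨{ toFun := F, map_add' := hadd, map_smul' := hsmul }, ?_⟩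
  intro hzero
  have h1 : F (Localization.mk 1 1) = 0 := by
    have := LinearMap.congr_fun hzero (Localization.mk 1 1)
    simpa using this
  rw [hFmk] at h1
  rw [one_smul] at h1
  have h2 : g (δ 1) = n₀ := by
    have := hgref (δ 1)
    rw [hPδ] at this
    simpa using this
  rw [h2] at h1
  exact hn₀ h1

end Hom
section Cos
variable {R : Type u} [CommRing R]

lemma annihilator_le_of_mem_cosupport {M : Type u} [AddCommGroup M] [Module R M]
    {q : PrimeSpectrum R} (hq : q ∈ cosupport R M) :
    (⊤ : Submodule R M).annihilator ≤ q.asIdeal := by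
  obtain ⟨f, hf⟩ := hq
  by_contra hle
  obtain ⟨a, ha, haq⟩ := SetLike.not_le_iff_exists.mp hle
  apply hf
  ext y
  refine Localization.induction_on y ?_
  rintro ⟨r, s⟩
  have key : (Localization.mk r s : Localization.AtPrime q.asIdeal)
      = a • Localization.mk r (s * ⟨a, haq⟩) := by
    rw [Localization.smul_mk, Localization.mk_eq_mk_iff, Localization.r_iff_exists]
    refine ⟨1, ?_⟩
    push_cast
    simp [smul_eq_mul]
    ring
  rw [key, map_smul]
  have : a • f (Localization.mk r (s * ⟨a, haq⟩)) = 0 :=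
    Submodule.mem_annihilator.mp ha _ Submodule.mem_top
  simp [this]

end Cos

section Secondary
variable {R : Type u} [CommRing R] {M : Type u} [AddCommGroup M] [Module R M]

/-- dichotomy-secondary submodule -/
def PreSec (R : Type u) [CommRing R] {M : Type u} [AddCommGroup M] [Module R M]
    (P : Submodule R M) : Prop :=
  P ≠ ⊥ ∧ ∀ x : R, (∀ m ∈ P, ∃ m' ∈ P, x • m' = m) ∨ (∃ k : ℕ, ∀ m ∈ P, x ^ k • m = 0)

lemma nilp_iff_mem_radical {P : Submodule R M} {x : R} :
    (∃ k : ℕ, ∀ m ∈ P, x ^ k • m = 0) ↔ x ∈ P.annihilator.radical := by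
  rw [Ideal.mem_radical_iff]
  refine exists_congr fun k => ?_
  rw [Submodule.mem_annihilator]

lemma surj_pow {P : Submodule R M} {x : R} (h : ∀ m ∈ P, ∃ m' ∈ P, x • m' = m) :
    ∀ k : ℕ, ∀ m ∈ P, ∃ m' ∈ P, x ^ k • m' = m := by
  intro k
  induction k with
  | zero => exact fun m hm => ⟨m, hm, by simp⟩
  | succ n ih =>
    intro m hm
    obtain ⟨m', hm', hx⟩ := h m hm
    obtain ⟨m'', hm'', hx'⟩ := ih m' hm'
    exact ⟨m'', hm'', by rw [pow_succ', mul_smul, hx', hx]⟩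

lemma PreSec.surj_of_not_mem {P : Submodule R M} (h : PreSec R P) {x : R}
    (hx : x ∉ P.annihilator.radical) : ∀ m ∈ P, ∃ m' ∈ P, x • m' = m := by
  rcases h.2 x with hs | hn
  · exact hs
  · exact absurd (nilp_iff_mem_radical.mp hn) hx

lemma PreSec.radical_isPrime {P : Submodule R M} (h : PreSec R P) :
    P.annihilator.radical.IsPrime := by
  constructor
  · intro htop
    have h1 : (1 : R) ∈ P.annihilator.radical := htop ▸ Submodule.mem_top
    obtain ⟨k, hk⟩ := nilp_iff_mem_radical.mpr h1
    apply h.1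
    rw [Submodule.eq_bot_iff]
    intro m hm
    have := hk m hm
    simpa using this
  · intro a b hab
    by_cases hb : b ∈ P.annihilator.radical
    · exact Or.inr hb
    · left
      have hsurj := h.surj_of_not_mem hb
      obtain ⟨k, hk⟩ := nilp_iff_mem_radical.mpr hab
      rw [← nilp_iff_mem_radical]
      refine ⟨k, fun m hm => ?_⟩
      obtain ⟨m', hm', hx⟩ := surj_pow hsurj k m hm
      rw [← hx, smul_smul, ← mul_pow]
      exact hk m' hm'

lemma PreSec.sup {A B : Submodule R M} (hA : PreSec R A) (hB : PreSec R B)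
    (hrad : A.annihilator.radical = B.annihilator.radical) :
    PreSec R (A ⊔ B) ∧ (A ⊔ B).annihilator.radical = A.annihilator.radical := by
  have hdich : ∀ x : R, (∀ m ∈ A ⊔ B, ∃ m' ∈ A ⊔ B, x • m' = m) ∨
      (∃ k : ℕ, ∀ m ∈ A ⊔ B, x ^ k • m = 0) := by
    intro x
    by_cases hx : x ∈ A.annihilator.radical
    · right
      obtain ⟨k, hk⟩ := nilp_iff_mem_radical.mpr hx
      obtain ⟨l, hl⟩ := nilp_iff_mem_radical.mpr (hrad ▸ hx)
      refine ⟨k + l, fun m hm => ?_⟩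
      obtain ⟨a, ha, b, hb, rfl⟩ := Submodule.mem_sup.mp hm
      have ha0 : x ^ (k + l) • a = 0 := by rw [pow_add, mul_comm, mul_smul, hk a ha, smul_zero]
      have hb0 : x ^ (k + l) • b = 0 := by rw [pow_add, mul_smul, hl b hb, smul_zero]
      rw [smul_add, ha0, hb0, add_zero]
    · left
      intro m hm
      obtain ⟨a, ha, b, hb, rfl⟩ := Submodule.mem_sup.mp hm
      obtain ⟨a', ha', hxa⟩ := hA.surj_of_not_mem hx a ha
      obtain ⟨b', hb', hxb⟩ := hB.surj_of_not_mem (hrad ▸ hx) b hb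
      refine ⟨a' + b', Submodule.mem_sup.mpr ⟨a', ha', b', hb', rfl⟩, ?_⟩
      rw [smul_add, hxa, hxb]
  refine ⟨⟨fun hbot => hA.1 (by rw [← le_bot_iff, ← hbot]; exact le_sup_left), hdich⟩, ?_⟩
  refine le_antisymm ?_ ?_
  · intro y hy
    obtain ⟨k, hk⟩ := Ideal.mem_radical_iff.mp hy
    refine Ideal.mem_radical_iff.mpr ⟨k, ?_⟩
    rw [Submodule.mem_annihilator] at hk ⊢
    exact fun n hn' => hk n (Submodule.mem_sup_left hn')
  · intro y hy
    obtain ⟨k, hk⟩ := nilp_iff_mem_radical.mpr hy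
    obtain ⟨l, hl⟩ := nilp_iff_mem_radical.mpr (hrad ▸ hy)
    rw [← nilp_iff_mem_radical]
    refine ⟨k + l, fun m hm => ?_⟩
    obtain ⟨a, ha, b, hb, rfl⟩ := Submodule.mem_sup.mp hm
    have ha0 : y ^ (k + l) • a = 0 := by rw [pow_add, mul_comm, mul_smul, hk a ha, smul_zero]
    have hb0 : y ^ (k + l) • b = 0 := by rw [pow_add, mul_smul, hl b hb, smul_zero]
    rw [smul_add, ha0, hb0, add_zero]

lemma PreSec.map {M' : Type u} [AddCommGroup M'] [Module R M'] {P : Submodule R M}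
    (h : PreSec R P) (f : M →ₗ[R] M') (hne : P.map f ≠ ⊥) :
    PreSec R (P.map f) ∧ (P.map f).annihilator.radical = P.annihilator.radical := by
  have hdich : ∀ x : R, (∀ m ∈ P.map f, ∃ m' ∈ P.map f, x • m' = m) ∨
      (∃ k : ℕ, ∀ m ∈ P.map f, x ^ k • m = 0) := by
    intro x
    rcases h.2 x with hs | hn
    · left
      rintro _ ⟨m, hm, rfl⟩
      obtain ⟨m', hm', hx⟩ := hs m hm
      exact ⟨f m', ⟨m', hm', rfl⟩, by rw [← map_smul, hx]⟩
    · right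
      obtain ⟨k, hk⟩ := hn
      refine ⟨k, ?_⟩
      rintro _ ⟨m, hm, rfl⟩
      rw [← map_smul, hk m hm, map_zero]
  refine ⟨⟨hne, hdich⟩, le_antisymm ?_ ?_⟩
  · intro y hy
    by_contra hyP
    -- y surjective on P, hence on image; but y nilpotent on image ⇒ image = ⊥
    apply hne
    obtain ⟨k, hk⟩ := nilp_iff_mem_radical.mpr hy
    have hsurj : ∀ m ∈ P.map f, ∃ m' ∈ P.map f, y • m' = m := by
      rintro _ ⟨m, hm, rfl⟩
      obtain ⟨m', hm', hx⟩ := h.surj_of_not_mem hyP m hm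
      exact ⟨f m', ⟨m', hm', rfl⟩, by rw [← map_smul, hx]⟩
    rw [Submodule.eq_bot_iff]
    intro m hm
    obtain ⟨m', hm', hx⟩ := surj_pow hsurj k m hm
    rw [← hx, hk m' hm']
  · intro y hy
    obtain ⟨k, hk⟩ := nilp_iff_mem_radical.mpr hy
    rw [← nilp_iff_mem_radical]
    refine ⟨k, ?_⟩
    rintro _ ⟨m, hm, rfl⟩
    rw [← map_smul, hk m hm, map_zero]

end Secondary
section Rep
variable {R : Type u} [CommRing R] {M : Type u} [AddCommGroup M] [Module R M]

/-- sum-irreducible submodule -/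
def SumIrr (R : Type u) [CommRing R] {M : Type u} [AddCommGroup M] [Module R M]
    (P : Submodule R M) : Prop :=
  P ≠ ⊥ ∧ ∀ A B : Submodule R M, A ≤ P → B ≤ P → A ⊔ B = P → A = P ∨ B = P

lemma exists_sumirr_decomp [IsArtinian R M] (P : Submodule R M) :
    ∃ s : Finset (Submodule R M), (∀ Q ∈ s, SumIrr R Q) ∧ s.sup id = P := by
  classical
  induction P using IsArtinian.induction with
  | _ P ih =>
    by_cases hbot : P = ⊥
    · exact ⟨∅, by simp, by simp [hbot]⟩
    by_cases hirr : SumIrr R P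
    · exact ⟨{P}, by simpa using hirr, by simp⟩
    · have : ∃ A B : Submodule R M, A ≤ P ∧ B ≤ P ∧ A ⊔ B = P ∧ A ≠ P ∧ B ≠ P := by
        by_contra hcon
        push_neg at hcon
        apply hirr
        refine ⟨hbot, fun A B hA hB hAB => ?_⟩
        by_contra hne
        push_neg at hne
        exact hne.2 (hcon A B hA hB hAB hne.1)
      obtain ⟨A, B, hA, hB, hAB, hAne, hBne⟩ := this
      obtain ⟨sA, hsA, hsupA⟩ := ih A (lt_of_le_of_ne hA hAne)
      obtain ⟨sB, hsB, hsupB⟩ := ih B (lt_of_le_of_ne hB hBne)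
      refine ⟨sA ∪ sB, ?_, ?_⟩
      · intro Q hQ
        rcases Finset.mem_union.mp hQ with h | h
        · exact hsA Q h
        · exact hsB Q h
      · rw [Finset.sup_union, hsupA, hsupB, hAB]

lemma SumIrr.presec [IsArtinian R M] {P : Submodule R M} (h : SumIrr R P) : PreSec R P := by
  refine ⟨h.1, fun x => ?_⟩
  classical
  set Pk : ℕ → Submodule R M := fun k => P.map (LinearMap.lsmul R M (x ^ k)) with hPkdef
  have hPkle : ∀ a b : ℕ, Pk (a + b) ≤ Pk a := by
    rintro a b _ ⟨m, hm, rfl⟩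
    refine ⟨x ^ b • m, P.smul_mem _ hm, ?_⟩
    simp only [LinearMap.lsmul_apply]
    rw [smul_smul, ← pow_add]
  have hPkP : ∀ a : ℕ, Pk a ≤ P := by
    rintro a _ ⟨m, hm, rfl⟩
    exact P.smul_mem _ hm
  -- minimal among Pk (k ≥ 1)
  obtain ⟨V, ⟨j₀, hj₀⟩, hmin⟩ := IsArtinian.set_has_minimal
    (Set.range (fun j : ℕ => Pk (j + 1))) ⟨Pk 1, ⟨0, rfl⟩⟩
  set K := j₀ + 1 with hKdef
  have hstab : Pk (K + K) = Pk K := by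
    have h1 : Pk (K + K) ≤ Pk K := by
      have : K + K = K + K := rfl
      exact hPkle K K
    rcases eq_or_lt_of_le h1 with he | hlt
    · exact he
    · exfalso
      have hj₀' : Pk K = V := hj₀
      have hwit : (fun j : ℕ => Pk (j + 1)) (j₀ + K) = Pk (K + K) := by
        show Pk (j₀ + K + 1) = Pk (K + K)
        congr 1
        omega
      exact hmin (Pk (K + K)) ⟨j₀ + K, hwit⟩ (hj₀' ▸ hlt)
  have hfit : Pk K ⊔ (P ⊓ LinearMap.ker (LinearMap.lsmul R M (x ^ K))) = P := by
    refine le_antisymm (sup_le (hPkP K) inf_le_left) ?_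
    intro m hm
    have h1 : x ^ K • m ∈ Pk (K + K) := by
      rw [hstab]
      exact ⟨m, hm, rfl⟩
    obtain ⟨n, hn, hn2⟩ := h1
    have : m = x ^ K • n + (m - x ^ K • n) := by abel
    rw [this]
    refine Submodule.add_mem_sup ⟨n, hn, rfl⟩ ?_
    refine ⟨Submodule.sub_mem _ hm (P.smul_mem _ hn), ?_⟩
    simp only [SetLike.mem_coe, LinearMap.mem_ker, LinearMap.lsmul_apply]
    simp only [LinearMap.lsmul_apply] at hn2
    rw [smul_sub, smul_smul, ← pow_add, hn2, sub_self]
  rcases h.2 _ _ (hPkP K) inf_le_left hfit with he | he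
  · -- P = x^K • P, so x is surjective on P
    left
    intro m hm
    rw [← he] at hm
    obtain ⟨n, hn, hn2⟩ := hm
    refine ⟨x ^ j₀ • n, P.smul_mem _ hn, ?_⟩
    rw [smul_smul, ← pow_succ']
    exact hn2
  · right
    refine ⟨K, fun m hm => ?_⟩
    rw [← he] at hm
    simpa using hm.2

lemma presec_finset_sup {t : Finset (Submodule R M)} (hne : t.Nonempty) (I : Ideal R)
    (h : ∀ Q ∈ t, PreSec R Q ∧ Q.annihilator.radical = I) :
    PreSec R (t.sup id) ∧ (t.sup id).annihilator.radical = I := by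
  classical
  induction hne using Finset.Nonempty.cons_induction with
  | singleton Q => simpa using h Q (by simp)
  | cons Q t hQt hne ih =>
    rw [Finset.sup_cons]
    have hQ := h Q (Finset.mem_cons_self _ _)
    have ht := ih fun Q' hQ' => h Q' (Finset.mem_cons.mpr (Or.inr hQ'))
    have := PreSec.sup hQ.1 ht.1 (by rw [hQ.2, ht.2])
    rw [hQ.2] at this
    exact this

lemma exists_merged (s : Finset (Submodule R M)) (h : ∀ Q ∈ s, PreSec R Q) :
    ∃ s' : Finset (Submodule R M), (∀ Q ∈ s', PreSec R Q) ∧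
      (∀ Q ∈ s', ∀ Q' ∈ s', Q.annihilator.radical = Q'.annihilator.radical → Q = Q') ∧
      s'.sup id = s.sup id ∧
      (∀ Q ∈ s', ∃ Q₀ ∈ s, Q.annihilator.radical = Q₀.annihilator.radical) := by
  classical
  set rads := s.image (fun Q => Q.annihilator.radical) with hradsdef
  set comp : Ideal R → Submodule R M :=
    fun I => (s.filter (fun Q => Q.annihilator.radical = I)).sup id with hcompdef
  have hcomp : ∀ I ∈ rads, PreSec R (comp I) ∧ (comp I).annihilator.radical = I := by
    intro I hI
    obtain ⟨Q₀, hQ₀, hQ₀I⟩ := Finset.mem_image.mp hI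
    refine presec_finset_sup ⟨Q₀, Finset.mem_filter.mpr ⟨hQ₀, hQ₀I⟩⟩ I ?_
    intro Q hQ
    obtain ⟨hQs, hQI⟩ := Finset.mem_filter.mp hQ
    exact ⟨h Q hQs, hQI⟩
  refine ⟨rads.image comp, ?_, ?_, ?_, ?_⟩
  · intro Q hQ
    obtain ⟨I, hI, rfl⟩ := Finset.mem_image.mp hQ
    exact (hcomp I hI).1
  · intro Q hQ Q' hQ' hrad
    obtain ⟨I, hI, rfl⟩ := Finset.mem_image.mp hQ
    obtain ⟨I', hI', rfl⟩ := Finset.mem_image.mp hQ'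
    rw [(hcomp I hI).2, (hcomp I' hI').2] at hrad
    rw [hrad]
  · refine le_antisymm ?_ ?_
    · refine Finset.sup_le ?_
      intro Q hQ
      obtain ⟨I, hI, rfl⟩ := Finset.mem_image.mp hQ
      refine Finset.sup_le ?_
      intro Q' hQ'
      exact Finset.le_sup (f := id) (Finset.mem_filter.mp hQ').1
    · refine Finset.sup_le ?_
      intro Q hQ
      refine le_trans ?_ (Finset.le_sup (f := id)
        (Finset.mem_image.mpr ⟨Q.annihilator.radical, Finset.mem_image.mpr ⟨Q, hQ, rfl⟩, rfl⟩))
      exact Finset.le_sup (f := id) (Finset.mem_filter.mpr ⟨hQ, rfl⟩)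
  · intro Q hQ
    obtain ⟨I, hI, rfl⟩ := Finset.mem_image.mp hQ
    obtain ⟨Q₀, hQ₀, hQ₀I⟩ := Finset.mem_image.mp hI
    exact ⟨Q₀, hQ₀, by rw [(hcomp I hI).2, hQ₀I]⟩

lemma exists_min_rep (s : Finset (Submodule R M))
    (hPre : ∀ Q ∈ s, PreSec R Q)
    (hinj : ∀ Q ∈ s, ∀ Q' ∈ s, Q.annihilator.radical = Q'.annihilator.radical → Q = Q')
    (hsup : s.sup id = ⊤) :
    ∃ (k : ℕ) (N : Fin k → Submodule R M) (q : Fin k → Ideal R),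
      (⨆ i, N i) = ⊤ ∧ (∀ i, IsSecondary R (q i) (N i)) ∧ Function.Injective q ∧
      (∀ i : Fin k, (⨆ j ∈ { j | j ≠ i }, N j) ≠ ⊤) ∧
      (∀ i, ∃ Q ∈ s, q i = Q.annihilator.radical) := by
  classical
  set T := s.powerset.filter (fun t => t.sup id = ⊤) with hTdef
  have hsT : s ∈ T := Finset.mem_filter.mpr ⟨Finset.mem_powerset_self s, hsup⟩
  obtain ⟨t, htT, htmin⟩ := T.exists_min_image Finset.card ⟨s, hsT⟩
  obtain ⟨hts, htsup⟩ := Finset.mem_filter.mp htT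
  rw [Finset.mem_powerset] at hts
  set k := Fintype.card ↥t with hkdef
  set e := (Fintype.equivFin ↥t) with hedef
  set N : Fin k → Submodule R M := fun i => ((e.symm i : ↥t) : Submodule R M) with hNdef
  have hNmem : ∀ i, N i ∈ t := fun i => (e.symm i).2
  have hNsurj : ∀ Q ∈ t, ∃ i, N i = Q := by
    intro Q hQ
    exact ⟨e ⟨Q, hQ⟩, by rw [hNdef]; simp⟩
  have hNinj : Function.Injective N := by
    intro i j hij
    have : (e.symm i : ↥t) = (e.symm j : ↥t) := Subtype.coe_injective hij
    exact e.symm.injective this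
  refine ⟨k, N, fun i => (N i).annihilator.radical, ?_, ?_, ?_, ?_, ?_⟩
  · refine le_antisymm le_top ?_
    rw [← htsup]
    refine Finset.sup_le fun Q hQ => ?_
    obtain ⟨i, rfl⟩ := hNsurj Q hQ
    exact le_iSup N i
  · intro i
    have hp := hPre (N i) (hts (hNmem i))
    exact ⟨hp.1, hp.2, rfl⟩
  · intro i j hij
    have := hinj (N i) (hts (hNmem i)) (N j) (hts (hNmem j)) hij
    exact hNinj this
  · intro i htop
    have herase : (t.erase (N i)).sup id = ⊤ := by
      refine le_antisymm le_top ?_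
      rw [← htop]
      refine iSup_le fun j => iSup_le fun hj => ?_
      refine Finset.le_sup (f := id) ?_
      exact Finset.mem_erase.mpr ⟨fun he => hj (hNinj he), hNmem j⟩
    have hmem : t.erase (N i) ∈ T := Finset.mem_filter.mpr
      ⟨Finset.mem_powerset.mpr (le_trans (Finset.erase_subset _ _) hts), herase⟩
    have := htmin _ hmem
    have hcard : (t.erase (N i)).card < t.card := Finset.card_erase_lt_of_mem (hNmem i)
    have hkt : t.card = k := by rw [hkdef, Fintype.card_coe]
    omega
  · intro i
    exact ⟨N i, hts (hNmem i), rfl⟩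

end Rep

/-- Let `R` be a Noetherian commutative ring, `X` a saturated subset of
`Spec R`, and `M` an Artinian `R`-module. Then `x ∈ R` is an `M`-filter co-regular element
with respect to `X` (i.e. `Cos_R(M/xM) ⊆ X`) iff `x` lies outside every prime in
`Att_R M − X`. -/
theorem statement0 (R : Type u) [CommRing R] [IsNoetherianRing R]
    (X : Set (PrimeSpectrum R)) (hX : IsSaturatedSet R X)
    (M : Type u) [AddCommGroup M] [Module R M] [IsArtinian R M] (x : R) :
    cosupport R (M ⧸ (Ideal.span {x} • (⊤ : Submodule R M))) ⊆ X ↔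
      ∀ p ∈ attachedPrimes R M, p ∉ X → x ∉ p.asIdeal := by
  classical
  set I := Ideal.span ({x} : Set R) with hIdef
  set W := I • (⊤ : Submodule R M) with hWdef
  constructor
  · -- forward direction
    intro hcos p hp hpX hxp
    obtain ⟨k, Nf, qf, hsup, hsec, hinjq, hmin, j, hqj⟩ := hp
    obtain ⟨hNbot, hdich, hrad⟩ := hsec j
    have hxqf : x ∈ (Nf j).annihilator.radical := by rw [← hrad, hqj]; exact hxp
    obtain ⟨K, hK⟩ := Ideal.mem_radical_iff.mp hxqf
    have hNle : ¬ (Nf j ≤ W) := by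
      intro hle
      set M' := ⨆ i ∈ {i | i ≠ j}, Nf i with hM'def
      have h1 : M' ⊔ W = ⊤ := by
        refine le_antisymm le_top ?_
        rw [← hsup]
        refine iSup_le fun i => ?_
        by_cases hij : i = j
        · subst hij; exact le_trans hle le_sup_right
        · exact le_trans (le_iSup₂ (f := fun i (_ : i ≠ j) => Nf i) i hij) le_sup_left
      have h2 : ∀ n : ℕ, M' ⊔ (I ^ (n + 1) • ⊤) = ⊤ := by
        intro n
        induction n with
        | zero => simpa [pow_one] using h1
        | succ n ih =>
          have e1 : I • (I ^ (n + 1) • (⊤ : Submodule R M)) = I ^ (n + 2) • ⊤ := by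
            rw [← Submodule.smul_assoc, smul_eq_mul, ← pow_succ']
          have step : I • (⊤ : Submodule R M) ≤ M' ⊔ I ^ (n + 2) • ⊤ := by
            conv_lhs => rw [← ih]
            rw [Submodule.smul_sup, e1]
            exact sup_le (le_trans Submodule.smul_le_right le_sup_left) le_sup_right
          refine le_antisymm le_top ?_
          calc (⊤ : Submodule R M) = M' ⊔ W := h1.symm
            _ ≤ M' ⊔ (M' ⊔ I ^ (n + 2) • ⊤) := sup_le_sup_left step M'
            _ = M' ⊔ I ^ (n + 2) • ⊤ := by rw [← sup_assoc, sup_idem]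
      have h3 : I ^ (K + 1) • (⊤ : Submodule R M) ≤ M' := by
        conv_lhs => rw [← hsup]
        rw [Submodule.smul_iSup]
        refine iSup_le fun i => ?_
        by_cases hij : i = j
        · subst hij
          have hbot : I ^ (K + 1) • Nf i ≤ ⊥ := by
            rw [hIdef, Ideal.span_singleton_pow]
            refine Submodule.smul_le.mpr ?_
            intro r hr n hn
            obtain ⟨c, hc⟩ := Ideal.mem_span_singleton'.mp hr
            have hxn : x ^ K • n = 0 := Submodule.mem_annihilator.mp hK n hn
            rw [← hc, mul_smul, pow_succ', mul_smul, hxn, smul_zero, smul_zero]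
            exact Submodule.zero_mem ⊥
          exact le_trans hbot bot_le
        · exact le_trans Submodule.smul_le_right
            (le_iSup₂ (f := fun i (_ : i ≠ j) => Nf i) i hij)
      apply hmin j
      have : (⊤ : Submodule R M) ≤ M' := by
        rw [← h2 K]
        exact sup_le le_rfl h3
      exact le_antisymm le_top this
    set Nt := (Nf j).map W.mkQ with hNtdef
    have hNtbot : Nt ≠ ⊥ := by
      intro hb
      apply hNle
      intro m hm
      have hmem : W.mkQ m ∈ Nt := ⟨m, hm, rfl⟩
      rw [hb, Submodule.mem_bot] at hmem
      rw [Submodule.mkQ_apply, Submodule.Quotient.mk_eq_zero] at hmem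
      exact hmem
    obtain ⟨y, hy, hyne⟩ := Nt.ne_bot_iff.mp hNtbot
    set n₀ : ↥Nt := ⟨y, hy⟩ with hn₀def
    have hn₀ : n₀ ≠ 0 := fun h => hyne (congrArg Subtype.val h)
    have hsurj : ∀ s : p.asIdeal.primeCompl,
        Function.Surjective (fun n : ↥Nt => (s : R) • n) := by
      intro s
      have hsnot : (s : R) ∉ (Nf j).annihilator.radical := by
        rw [← hrad, hqj]; exact s.2
      have hsj := PreSec.surj_of_not_mem ⟨hNbot, hdich⟩ hsnot
      rintro ⟨ybar, hybar⟩
      obtain ⟨m, hm, hmy⟩ := hybar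
      obtain ⟨m', hm', hsm⟩ := hsj m hm
      refine ⟨⟨W.mkQ m', ⟨m', hm', rfl⟩⟩, ?_⟩
      apply Subtype.ext
      show (s : R) • W.mkQ m' = ybar
      rw [← map_smul, hsm, hmy]
    obtain ⟨f, hf⟩ := exists_nonzero_hom p.asIdeal hsurj n₀ hn₀
    have hp_cos : p ∈ cosupport R (M ⧸ W) := by
      refine ⟨Nt.subtype.comp f, fun h0 => hf (LinearMap.ext fun z => ?_)⟩
      have := LinearMap.congr_fun h0 z
      simp only [LinearMap.comp_apply, Submodule.subtype_apply, LinearMap.zero_apply] at this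
      exact Subtype.ext (by simpa using this)
    exact hpX (hcos hp_cos)
  · -- backward direction
    intro H q hq
    have hann := annihilator_le_of_mem_cosupport hq
    obtain ⟨s0, hs0irr, hs0sup⟩ := exists_sumirr_decomp (⊤ : Submodule R M)
    obtain ⟨s1, hs1pre, hs1inj, hs1sup, _⟩ :=
      exists_merged s0 (fun Q hQ => (hs0irr Q hQ).presec)
    rw [hs0sup] at hs1sup
    obtain ⟨k, Nf, qf, hsup, hsec, hinjq, hmin, hqsrc⟩ := exists_min_rep s1 hs1pre hs1inj hs1sup
    have hqf_rad : ∀ i, qf i = (Nf i).annihilator.radical := by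
      intro i
      obtain ⟨Q, hQ, hQeq⟩ := hqsrc i
      exact (hsec i).2.2
    have hqf_prime : ∀ i, (qf i).IsPrime := fun i => by
      rw [hqf_rad i]
      exact PreSec.radical_isPrime ⟨(hsec i).1, (hsec i).2.1⟩
    have hatt : ∀ i, (⟨qf i, hqf_prime i⟩ : PrimeSpectrum R) ∈ attachedPrimes R M :=
      fun i => ⟨k, Nf, qf, hsup, hsec, hinjq, hmin, i, rfl⟩
    -- push forward to M ⧸ W
    set Nt : Fin k → Submodule R (M ⧸ W) := fun i => (Nf i).map W.mkQ with hNtdef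
    have hNtsup : (⨆ i, Nt i) = ⊤ := by
      rw [hNtdef]
      simp only []
      rw [← Submodule.map_iSup, hsup, Submodule.map_top, Submodule.range_mkQ]
    have hmap : ∀ i, Nt i ≠ ⊥ → PreSec R (Nt i) ∧ (Nt i).annihilator.radical = qf i := by
      intro i h
      have := PreSec.map ⟨(hsec i).1, (hsec i).2.1⟩ W.mkQ h
      exact ⟨this.1, by rw [this.2, ← hqf_rad i]⟩
    set v := Finset.univ.filter (fun i => Nt i ≠ ⊥) with hvdef
    set s2 := v.image Nt with hs2def
    have hs2elt : ∀ Q ∈ s2, ∃ i, Q = Nt i ∧ Nt i ≠ ⊥ := by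
      intro Q hQ
      obtain ⟨i, hi, rfl⟩ := Finset.mem_image.mp hQ
      exact ⟨i, rfl, (Finset.mem_filter.mp hi).2⟩
    have hs2pre : ∀ Q ∈ s2, PreSec R Q := by
      intro Q hQ
      obtain ⟨i, rfl, hne⟩ := hs2elt Q hQ
      exact (hmap i hne).1
    have hs2inj : ∀ Q ∈ s2, ∀ Q' ∈ s2,
        Q.annihilator.radical = Q'.annihilator.radical → Q = Q' := by
      intro Q hQ Q' hQ' hr
      obtain ⟨i, rfl, hne⟩ := hs2elt Q hQ
      obtain ⟨i', rfl, hne'⟩ := hs2elt Q' hQ'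
      rw [(hmap i hne).2, (hmap i' hne').2] at hr
      rw [hinjq hr]
    have hs2sup : s2.sup id = ⊤ := by
      refine le_antisymm le_top ?_
      rw [← hNtsup]
      refine iSup_le fun i => ?_
      by_cases hne : Nt i = ⊥
      · rw [hne]; exact bot_le
      · exact Finset.le_sup (f := id)
          (Finset.mem_image.mpr ⟨i, Finset.mem_filter.mpr ⟨Finset.mem_univ i, hne⟩, rfl⟩)
    obtain ⟨k2, N2, q2, hsup2, hsec2, _, _, hsrc2⟩ := exists_min_rep s2 hs2pre hs2inj hs2sup
    -- product of annihilators is contained in q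
    have hprod : (∏ l : Fin k2, (N2 l).annihilator) ≤ (⊤ : Submodule R (M ⧸ W)).annihilator := by
      intro a ha
      rw [Submodule.mem_annihilator]
      intro n _
      have hn : n ∈ ⨆ l, N2 l := by rw [hsup2]; trivial
      refine Submodule.iSup_induction (motive := fun n => a • n = 0) _ hn ?_ (smul_zero a) ?_
      · intro l m hm
        have hal : a ∈ (N2 l).annihilator :=
          (le_trans Ideal.prod_le_inf (Finset.inf_le (Finset.mem_univ l))) ha
        exact Submodule.mem_annihilator.mp hal m hm
      · intro m₁ m₂ h₁ h₂
        rw [smul_add, h₁, h₂, add_zero]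
    obtain ⟨l, _, hlq⟩ := (q.isPrime.prod_le).mp (le_trans hprod hann)
    have hq2le : q2 l ≤ q.asIdeal := by
      rw [(hsec2 l).2.2]
      calc (N2 l).annihilator.radical ≤ q.asIdeal.radical := Ideal.radical_mono hlq
        _ = q.asIdeal := q.isPrime.radical
    have hxann : x ∈ (⊤ : Submodule R (M ⧸ W)).annihilator := by
      rw [Submodule.mem_annihilator]
      intro n _
      obtain ⟨m, rfl⟩ := W.mkQ_surjective n
      rw [← map_smul, Submodule.mkQ_apply, Submodule.Quotient.mk_eq_zero]
      exact Submodule.smul_mem_smul (Ideal.mem_span_singleton_self x) Submodule.mem_top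
    have hx2 : x ∈ q2 l := by
      rw [(hsec2 l).2.2]
      exact Ideal.le_radical (Submodule.annihilator_mono le_top hxann)
    obtain ⟨Q, hQ, hQrad⟩ := hsrc2 l
    obtain ⟨i, rfl, hne⟩ := hs2elt Q hQ
    have hq2qf : q2 l = qf i := by rw [hQrad, (hmap i hne).2]
    have hpi_mem : (⟨qf i, hqf_prime i⟩ : PrimeSpectrum R) ∈ X := by
      by_contra hnX
      exact (H _ (hatt i) hnX) (by show x ∈ qf i; rw [← hq2qf]; exact hx2)
    refine hX _ hpi_mem q ?_
    show qf i ≤ q.asIdeal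
    rw [← hq2qf]
    exact hq2le
end Coset
end

section
/- Let R be a commutative ring, X an arbitrary subset of Spec R, and M an Artinian R-module. A sequence x_1, x_2, …, x_n ∈ R is an M-filter co-regular sequence with respect to X if and only if for every prime p ∈ Cos_R M − X, the sequence x_1/1, x_2/1, …, x_n/1 ∈ R_p is a Hom_R(R_p, M)-quasi co-regular sequence (as a sequence on the R_p-module Hom_R(R_p, M)). -/
open CategoryTheory

universe u

namespace StatementTwoAux

namespace CoregLift
variable {R : Type u} [CommRing R] {M M' : Type u} [AddCommGroup M] [Module R M]
  [AddCommGroup M'] [Module R M']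

theorem artinian_coset_inter [IsArtinian R M] {ι : Type*} [Nonempty ι] (D : ι → Set M)
    (hc : ∀ i, ∃ (N : Submodule R M) (a : M), D i = {m | m - a ∈ N})
    (dir : ∀ i j, ∃ k, D k ⊆ D i ∧ D k ⊆ D j) :
    (⋂ i, D i).Nonempty := by
  choose N a hNa using hc
  obtain ⟨P, ⟨i₀, hi₀⟩, hmin⟩ :=
    (wellFounded_lt (α := Submodule R M)).has_min (Set.range N) (Set.range_nonempty N)
  refine ⟨a i₀, Set.mem_iInter.2 fun j => ?_⟩
  obtain ⟨k, hk₀, hkj⟩ := dir i₀ j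
  have hsub : N k ≤ P := by
    intro n hn
    have h1 : n + a k ∈ D k := by rw [hNa k]; simp [hn]
    have h2 : a k ∈ D k := by rw [hNa k]; simp
    have h1' := hk₀ h1
    have h2' := hk₀ h2
    rw [hNa i₀, Set.mem_setOf_eq] at h1' h2'
    rw [← hi₀]
    have := (N i₀).sub_mem h1' h2'
    simpa using this
  have heq : N k = P := by
    rcases lt_or_eq_of_le hsub with h | h
    · exact absurd h (hmin (N k) (Set.mem_range_self k))
    · exact h
  have hik : a i₀ ∈ D k := by
    have h2 : a k ∈ D k := by rw [hNa k]; simp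
    have := hk₀ h2
    rw [hNa i₀, Set.mem_setOf_eq] at this
    rw [hNa k, Set.mem_setOf_eq, heq, ← hi₀]
    simpa using (N i₀).neg_mem this
  exact hkj hik

variable (S : Submonoid R)

/-- Constraint type: `π`-compatibility, additivity, scalar compatibility. -/
abbrev Con : Type u :=
  (Localization S) ⊕ ((Localization S × Localization S) ⊕ (R × Localization S))

variable {S}
variable (π : M →ₗ[R] M') (f : Localization S →ₗ[R] M')

/-- Satisfaction of one constraint by a bare function. -/
def Sat (h : Localization S → M) (γ : Con S) : Prop :=
  match γ with
  | Sum.inl w => π (h w) = f w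
  | Sum.inr (Sum.inl (u, v)) => h (u + v) = h u + h v
  | Sum.inr (Sum.inr (r, w)) => h (r • w) = r • h w

/-- The points mentioned by a constraint. -/
def pts (γ : Con S) : List (Localization S) :=
  match γ with
  | Sum.inl w => [w]
  | Sum.inr (Sum.inl (u, v)) => [u + v, u, v]
  | Sum.inr (Sum.inr (r, w)) => [r • w, w]

theorem sat_congr {h₁ h₂ : Localization S → M} {γ : Con S}
    (hagree : ∀ w ∈ pts γ, h₁ w = h₂ w) (hs : Sat π f h₁ γ) : Sat π f h₂ γ := by
  rcases γ with w | ⟨⟨u, v⟩ | ⟨r, w⟩⟩ <;> simp only [Sat, pts] at *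
  · rw [← hagree w (by simp)]; exact hs
  · rw [← hagree (u + v) (by simp), ← hagree u (by simp), ← hagree v (by simp)]; exact hs
  · rw [← hagree (r • w) (by simp), ← hagree w (by simp)]; exact hs

theorem sat_add {h n : Localization S → M} {γ : Con S} (hh : Sat π f h γ)
    (hn : Sat π 0 n γ) : Sat π f (h + n) γ := by
  rcases γ with w | ⟨⟨u, v⟩ | ⟨r, w⟩⟩ <;>
    simp only [Sat, Pi.add_apply, map_add, LinearMap.zero_apply] at *
  · rw [hh, hn]; abel
  · rw [hh, hn]; abel
  · rw [hh, hn, smul_add]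

theorem sat_sub {h h' : Localization S → M} {γ : Con S} (hh : Sat π f h γ)
    (hh' : Sat π f h' γ) : Sat π 0 (h - h') γ := by
  rcases γ with w | ⟨⟨u, v⟩ | ⟨r, w⟩⟩ <;>
    simp only [Sat, Pi.sub_apply, map_sub, LinearMap.zero_apply] at *
  · rw [hh, hh']; abel
  · rw [hh, hh']; abel
  · rw [hh, hh', smul_sub]

theorem sat_zero {γ : Con S} : Sat π 0 (0 : Localization S → M) γ := by
  rcases γ with w | ⟨⟨u, v⟩ | ⟨r, w⟩⟩ <;> simp [Sat]

theorem sat_smul {n : Localization S → M} {γ : Con S} (r₀ : R) (hn : Sat π 0 n γ) :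
    Sat π 0 (r₀ • n) γ := by
  rcases γ with w | ⟨⟨u, v⟩ | ⟨r, w⟩⟩ <;>
    simp only [Sat, Pi.smul_apply, map_smul, LinearMap.zero_apply] at *
  · rw [hn, smul_zero]
  · rw [hn, smul_add]
  · rw [hn, smul_comm]

/-- A relational partial assignment is good if every finite set of constraints is satisfied
by some function agreeing with it. -/
def Good (σ : Set (Localization S × M)) : Prop :=
  ∀ Γ : Finset (Con S), ∃ h : Localization S → M,
    (∀ q ∈ σ, h q.1 = q.2) ∧ ∀ γ ∈ Γ, Sat π f h γ

theorem good_empty (hπ : Function.Surjective π) : Good π f (∅ : Set (Localization S × M)) := by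
  classical
  intro Γ
  set P : List (Localization S) := Γ.toList.flatMap pts with hPdef
  have hP : ∀ γ ∈ Γ, ∀ w ∈ pts γ, w ∈ P := fun γ hγ w hw =>
    List.mem_flatMap.2 ⟨γ, Finset.mem_toList.2 hγ, hw⟩
  obtain ⟨b, hb⟩ := IsLocalization.exist_integer_multiples_of_finset S P.toFinset
  have haa : ∀ w : Localization S, ∃ c : R,
      w ∈ P → algebraMap R (Localization S) c = (b : R) • w := by
    intro w
    by_cases hw : w ∈ P
    · obtain ⟨c, hc⟩ := hb w (List.mem_toFinset.2 hw)
      exact ⟨c, fun _ => hc⟩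
    · exact ⟨0, fun h => absurd h hw⟩
  choose aa haa using haa
  let errR : Con S → R := fun γ =>
    match γ with
    | Sum.inl _ => 0
    | Sum.inr (Sum.inl (u, v)) => aa (u + v) - aa u - aa v
    | Sum.inr (Sum.inr (r, w)) => aa (r • w) - r * aa w
  have hkill : ∀ γ : Con S, ∃ t : S, γ ∈ Γ → (t : R) * errR γ = 0 := by
    intro γ
    by_cases hγ : γ ∈ Γ
    · have hz : algebraMap R (Localization S) (errR γ) = 0 := by
        rcases γ with w | ⟨⟨u, v⟩ | ⟨r, w⟩⟩
        · simp [errR]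
        · have h1 := haa (u + v) (hP _ hγ _ (by simp [pts]))
          have h2 := haa u (hP _ hγ _ (by simp [pts]))
          have h3 := haa v (hP _ hγ _ (by simp [pts]))
          simp only [errR, map_sub, h1, h2, h3, smul_add]
          abel
        · have h1 := haa (r • w) (hP _ hγ _ (by simp [pts]))
          have h2 := haa w (hP _ hγ _ (by simp [pts]))
          simp only [errR, map_sub, map_mul, h1, h2]
          rw [← Algebra.smul_def, smul_comm, sub_self]
      obtain ⟨t, ht⟩ := (IsLocalization.map_eq_zero_iff S (Localization S) (errR γ)).1 hz
      exact ⟨t, fun _ => ht⟩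
    · exact ⟨1, fun h => absurd h hγ⟩
  choose tt htt using hkill
  set T : R := ∏ γ ∈ Γ, (tt γ : R) with hTdef
  set U : S := b * ∏ γ ∈ Γ, tt γ with hUdef
  have hUcoe : (U : R) = (b : R) * T := by
    simp [hUdef, hTdef]
  obtain ⟨m₁, hm₁⟩ := hπ (f (Localization.mk 1 U))
  have herr : ∀ γ ∈ Γ, errR γ * T = 0 := by
    intro γ hγ
    rw [hTdef, ← Finset.mul_prod_erase Γ _ hγ, ← mul_assoc, mul_comm (errR γ), htt γ hγ,
      zero_mul]
  have hmkw : ∀ w ∈ P, (aa w * T) • Localization.mk 1 U = w := by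
    intro w hw
    rw [Localization.smul_mk, smul_eq_mul, mul_one, Localization.mk_eq_mk',
      IsLocalization.mk'_eq_iff_eq_mul]
    rw [map_mul, haa w hw, hUcoe, map_mul, Algebra.smul_def]
    ring
  refine ⟨fun w => (aa w * T) • m₁, fun q hq => absurd hq (Set.notMem_empty q), ?_⟩
  intro γ hγ
  rcases γ with w | ⟨⟨u, v⟩ | ⟨r, w⟩⟩
  · show π ((aa w * T) • m₁) = f w
    rw [map_smul, hm₁, ← map_smul, hmkw w (hP _ hγ _ (by simp [pts]))]
  · show (aa (u + v) * T) • m₁ = (aa u * T) • m₁ + (aa v * T) • m₁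
    have h0 : ((aa (u + v) - aa u - aa v) * T) • m₁ = 0 := by
      rw [herr _ hγ, zero_smul]
    rw [sub_mul, sub_mul, sub_smul, sub_smul, sub_sub, sub_eq_zero] at h0
    exact h0
  · show (aa (r • w) * T) • m₁ = r • ((aa w * T) • m₁)
    have h0 : ((aa (r • w) - r * aa w) * T) • m₁ = 0 := by
      rw [herr _ hγ, zero_smul]
    rw [sub_mul, sub_smul, sub_eq_zero] at h0
    rw [h0, smul_smul, mul_assoc]

theorem good_sUnion {c : Set (Set (Localization S × M))} (hsub : ∀ σ ∈ c, Good π f σ)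
    (hchain : IsChain (· ⊆ ·) c) (hne : c.Nonempty) : Good π f (⋃₀ c) := by
  classical
  have hfun : ∀ q ∈ ⋃₀ c, ∀ q' ∈ ⋃₀ c, q.1 = q'.1 → q.2 = q'.2 := by
    rintro q ⟨σ₁, hσ₁, hq⟩ q' ⟨σ₂, hσ₂, hq'⟩ heq
    have hex : ∃ σ ∈ c, q ∈ σ ∧ q' ∈ σ := by
      rcases eq_or_ne σ₁ σ₂ with rfl | hne'
      · exact ⟨σ₁, hσ₁, hq, hq'⟩
      rcases hchain hσ₁ hσ₂ hne' with h | h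
      exacts [⟨σ₂, hσ₂, h hq, hq'⟩, ⟨σ₁, hσ₁, hq, h hq'⟩]
    obtain ⟨σ, hσ, h1, h2⟩ := hex
    obtain ⟨h, hagree, -⟩ := hsub σ hσ (∅ : Finset (Con S))
    rw [← hagree q h1, ← hagree q' h2, heq]
  intro Γ
  set P : List (Localization S) := Γ.toList.flatMap pts with hPdef
  have hP : ∀ γ ∈ Γ, ∀ w ∈ pts γ, w ∈ P := fun γ hγ w hw =>
    List.mem_flatMap.2 ⟨γ, Finset.mem_toList.2 hγ, hw⟩
  set dom : Localization S → Prop := fun w => ∃ m, (w, m) ∈ ⋃₀ c with hdomdef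
  let val : Localization S → M := fun w => if hw : dom w then hw.choose else 0
  have hvalmem : ∀ w, dom w → (w, val w) ∈ ⋃₀ c := by
    intro w hw
    simp only [val, dif_pos hw]
    exact hw.choose_spec
  have hval : ∀ q ∈ ⋃₀ c, val q.1 = q.2 := by
    rintro ⟨w, m⟩ hq
    exact hfun (w, val w) (hvalmem w ⟨m, hq⟩) (w, m) hq rfl
  have hub : ∀ l : List (Localization S), ∃ σ₀ ∈ c, ∀ w ∈ l, dom w → (w, val w) ∈ σ₀ := by
    intro l
    induction l with
    | nil =>
      obtain ⟨σ₀, hσ₀⟩ := hne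
      exact ⟨σ₀, hσ₀, by simp⟩
    | cons w l ih =>
      obtain ⟨σ', hσ'c, hσ'⟩ := ih
      by_cases hw : dom w
      · obtain ⟨σw, hσwc, hσwm⟩ := hvalmem w hw
        rcases eq_or_ne σ' σw with rfl | hne'
        · exact ⟨σ', hσ'c, by
            intro w' hw' hdw'
            rcases List.mem_cons.1 hw' with rfl | hw''
            exacts [hσwm, hσ' _ hw'' hdw']⟩
        rcases hchain hσ'c hσwc hne' with h | h
        · refine ⟨σw, hσwc, ?_⟩
          intro w' hw' hdw'
          rcases List.mem_cons.1 hw' with rfl | hw''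
          exacts [hσwm, h (hσ' _ hw'' hdw')]
        · refine ⟨σ', hσ'c, ?_⟩
          intro w' hw' hdw'
          rcases List.mem_cons.1 hw' with rfl | hw''
          exacts [h hσwm, hσ' _ hw'' hdw']
      · refine ⟨σ', hσ'c, ?_⟩
        intro w' hw' hdw'
        rcases List.mem_cons.1 hw' with rfl | hw''
        exacts [absurd hdw' hw, hσ' _ hw'' hdw']
  obtain ⟨σ₀, hσ₀c, hσ₀⟩ := hub P
  obtain ⟨h₀, hagree₀, hsat₀⟩ := hsub σ₀ hσ₀c Γ
  refine ⟨fun w => if hw : dom w then val w else h₀ w, ?_, ?_⟩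
  · intro q hq
    have hw : dom q.1 := ⟨q.2, hq⟩
    simp only [dif_pos hw]
    exact hval q hq
  · intro γ hγ
    refine sat_congr π f (h₁ := h₀) ?_ (hsat₀ γ hγ)
    intro w hw
    by_cases hdw : dom w
    · rw [dif_pos hdw]
      exact hagree₀ (w, val w) (hσ₀ w (hP γ hγ w hw) hdw)
    · rw [dif_neg hdw]

theorem lift_artinian [IsArtinian R M] (hπ : Function.Surjective π) :
    ∃ g : Localization S →ₗ[R] M, ∀ t, π (g t) = f t := by
  classical
  obtain ⟨σmax, -, hmax⟩ := zorn_subset_nonempty {σ : Set (Localization S × M) | Good π f σ}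
    (fun c hc hchain hne =>
      ⟨⋃₀ c, good_sUnion π f (fun σ hσ => hc hσ) hchain hne,
        fun s hs => Set.subset_sUnion_of_mem hs⟩)
    ∅ (good_empty π f hπ)
  have hGood : Good π f σmax := hmax.1
  have htot : ∀ w : Localization S, ∃ m, (w, m) ∈ σmax := by
    by_contra hcon
    push_neg at hcon
    obtain ⟨w₀, hw₀⟩ := hcon
    let N' : Finset (Con S) → Submodule R (Localization S → M) := fun Γ =>
      { carrier := {n | (∀ q ∈ σmax, n q.1 = 0) ∧ ∀ γ ∈ Γ, Sat π 0 n γ}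
        add_mem' := by
          rintro n₁ n₂ ⟨ha1, hs1⟩ ⟨ha2, hs2⟩
          exact ⟨fun q hq => by simp [Pi.add_apply, ha1 q hq, ha2 q hq],
            fun γ hγ => by simpa using sat_add π 0 (hs1 γ hγ) (hs2 γ hγ)⟩
        zero_mem' := ⟨fun q hq => rfl, fun γ hγ => sat_zero π⟩
        smul_mem' := by
          rintro r₀ n ⟨ha, hs⟩
          exact ⟨fun q hq => by simp [Pi.smul_apply, ha q hq],
            fun γ hγ => sat_smul π r₀ (hs γ hγ)⟩ }
    set Sol : Finset (Con S) → Set (Localization S → M) := fun Γ =>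
      {h | (∀ q ∈ σmax, h q.1 = q.2) ∧ ∀ γ ∈ Γ, Sat π f h γ} with hSoldef
    have hSolne : ∀ Γ, (Sol Γ).Nonempty := by
      intro Γ
      obtain ⟨h, h1, h2⟩ := hGood Γ
      exact ⟨h, h1, h2⟩
    set D : Finset (Con S) → Set M := fun Γ => (fun h => h w₀) '' Sol Γ with hDdef
    have hcoset : ∀ Γ, ∃ (N : Submodule R M) (a : M), D Γ = {m | m - a ∈ N} := by
      intro Γ
      obtain ⟨h₀, hh₀⟩ := hSolne Γ
      refine ⟨(N' Γ).map (LinearMap.proj (R := R) (φ := fun _ : Localization S => M) w₀),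
        h₀ w₀, ?_⟩
      ext m
      simp only [hDdef, Set.mem_image, Set.mem_setOf_eq, Submodule.mem_map]
      constructor
      · rintro ⟨h, hh, rfl⟩
        refine ⟨h - h₀, ⟨fun q hq => by simp [Pi.sub_apply, hh.1 q hq, hh₀.1 q hq],
          fun γ hγ => sat_sub π f (hh.2 γ hγ) (hh₀.2 γ hγ)⟩, rfl⟩
      · rintro ⟨n, hn, hnm⟩
        refine ⟨h₀ + n, ⟨fun q hq => by simp [Pi.add_apply, hh₀.1 q hq, hn.1 q hq],
          fun γ hγ => sat_add π f (hh₀.2 γ hγ) (hn.2 γ hγ)⟩, ?_⟩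
        have : n w₀ = m - h₀ w₀ := hnm
        simp [Pi.add_apply, this]
    have hdir : ∀ Γ Γ', ∃ Γ'', D Γ'' ⊆ D Γ ∧ D Γ'' ⊆ D Γ' := by
      intro Γ Γ'
      refine ⟨Γ ∪ Γ', Set.image_mono ?_, Set.image_mono ?_⟩
      · rintro h ⟨h1, h2⟩
        exact ⟨h1, fun γ hγ => h2 γ (Finset.mem_union_left _ hγ)⟩
      · rintro h ⟨h1, h2⟩
        exact ⟨h1, fun γ hγ => h2 γ (Finset.mem_union_right _ hγ)⟩
    obtain ⟨a, ha⟩ := artinian_coset_inter D hcoset hdir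
    have hgood' : Good π f (insert (w₀, a) σmax) := by
      intro Γ
      obtain ⟨h, hh, hw⟩ := Set.mem_iInter.1 ha Γ
      refine ⟨h, ?_, hh.2⟩
      intro q hq
      rcases Set.mem_insert_iff.1 hq with rfl | hq'
      · exact hw
      · exact hh.1 q hq'
    have hsubset := hmax.2 hgood' (Set.subset_insert _ _)
    exact hw₀ a (hsubset (Set.mem_insert _ _))
  choose val hval using htot
  have hsat : ∀ γ : Con S, Sat π f val γ := by
    intro γ
    obtain ⟨h, hagree, hsatγ⟩ := hGood {γ}
    exact sat_congr π f (fun w _ => hagree (w, val w) (hval w)) (hsatγ γ (Finset.mem_singleton_self γ))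
  refine ⟨{ toFun := val,
            map_add' := fun u v => hsat (Sum.inr (Sum.inl (u, v))),
            map_smul' := fun r w => hsat (Sum.inr (Sum.inr (r, w))) },
    fun t => hsat (Sum.inl t)⟩

end CoregLift


namespace CoregLift
open Pointwise
variable {R : Type u} [CommRing R] {M M' : Type u} [AddCommGroup M] [Module R M]
  [AddCommGroup M'] [Module R M']

theorem smul_eq_zero_iff {S : Type u} [CommRing S] [Algebra R S] (c : S) (F : S →ₗ[R] M) :
    c • F = 0 ↔ ∀ t, F (c * t) = 0 := by
  constructor
  · intro h t
    have := LinearMap.ext_iff.1 h t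
    rwa [show (c • F) t = F (c * t) from rfl] at this
  · intro h
    ext t
    rw [show (c • F) t = F (c * t) from rfl, h t, LinearMap.zero_apply]

theorem mem_coloc_torsion_iff {S : Type u} [CommRing S] [Algebra R S] (s : Set R)
    (F : S →ₗ[R] M) :
    F ∈ Submodule.torsionBySet S (S →ₗ[R] M) ((fun r => algebraMap R S r) '' s)
      ↔ ∀ t, F t ∈ Submodule.torsionBySet R M s := by
  simp only [Submodule.mem_torsionBySet_iff]
  constructor
  · intro h t
    rintro ⟨r, hr⟩
    have h1 := (smul_eq_zero_iff _ F).1 (h ⟨algebraMap R S r, ⟨r, hr, rfl⟩⟩) t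
    rwa [← Algebra.smul_def, F.map_smul] at h1
  · intro h a
    obtain ⟨r, hr, hc⟩ := a.2
    have hc' : algebraMap R S r = (a : S) := hc
    refine (smul_eq_zero_iff _ F).2 fun t => ?_
    rw [← hc', ← Algebra.smul_def, F.map_smul]
    exact h t ⟨r, hr⟩

variable (p : PrimeSpectrum R) [IsArtinian R M]

/-- If all colocalized maps into `T ⧸ aT` vanish, then `a` divides within `Hom(R_p, T)`. -/
theorem div_of_quot_zero (a : R) (T : Submodule R M)
    (hzero : ∀ f : Localization.AtPrime p.asIdeal →ₗ[R]
        (T ⧸ (Ideal.span {a} • (⊤ : Submodule R T))), f = 0)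
    (F : Localization.AtPrime p.asIdeal →ₗ[R] M) (hF : ∀ t, F t ∈ T) :
    ∃ G : Localization.AtPrime p.asIdeal →ₗ[R] M, (∀ t, G t ∈ T) ∧
      algebraMap R (Localization.AtPrime p.asIdeal) a • G = F := by
  have hN : ∀ y : T, a • y ∈ Ideal.span {a} • (⊤ : Submodule R T) :=
    fun y => Submodule.smul_mem_smul (Ideal.mem_span_singleton_self a) trivial
  have hNrep : ∀ z ∈ Ideal.span {a} • (⊤ : Submodule R T), ∃ y : T, a • y = z := by
    intro z hz
    rw [Submodule.ideal_span_singleton_smul] at hz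
    have hz' : z ∈ a • ((⊤ : Submodule R T) : Set T) := hz
    obtain ⟨y, -, hy⟩ := Set.mem_smul_set.1 hz'
    exact ⟨y, hy⟩
  set F' := F.codRestrict T hF with hF'def
  have hq : ∀ t, F' t ∈ Ideal.span {a} • (⊤ : Submodule R T) := by
    intro t
    have h0 := hzero ((Ideal.span {a} • (⊤ : Submodule R T)).mkQ.comp F')
    have ht := LinearMap.ext_iff.1 h0 t
    simpa [Submodule.Quotient.mk_eq_zero] using ht
  set π₂ := LinearMap.codRestrict (Ideal.span {a} • (⊤ : Submodule R T))
    (a • LinearMap.id) (fun y => hN y) with hπ₂def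
  have hπ₂ : Function.Surjective π₂ := by
    rintro ⟨z, hz⟩
    obtain ⟨y, hy⟩ := hNrep z hz
    exact ⟨y, Subtype.ext (by simpa [hπ₂def] using hy)⟩
  obtain ⟨G'', hG''⟩ := lift_artinian π₂
    (LinearMap.codRestrict (Ideal.span {a} • (⊤ : Submodule R T)) F' hq) hπ₂
  refine ⟨T.subtype.comp G'', fun t => (G'' t).2, ?_⟩
  ext t
  rw [show (algebraMap R (Localization.AtPrime p.asIdeal) a • T.subtype.comp G'') t
      = (T.subtype.comp G'') (algebraMap R (Localization.AtPrime p.asIdeal) a * t) from rfl,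
    ← Algebra.smul_def, LinearMap.map_smul]
  have h1 : (π₂ (G'' t) : T) = F' t := by rw [hG'' t]; rfl
  have h2 : (π₂ (G'' t) : T) = a • G'' t := rfl
  have h3 : ((a • G'' t : T) : M) = F t := by rw [← h2, h1, hF'def]; rfl
  simpa using h3

/-- Conversely, divisibility kills all maps into the quotient. -/
theorem quot_zero_of_div (a : R) (T : Submodule R M)
    (hdiv : ∀ F : Localization.AtPrime p.asIdeal →ₗ[R] M, (∀ t, F t ∈ T) →
      ∃ G : Localization.AtPrime p.asIdeal →ₗ[R] M, (∀ t, G t ∈ T) ∧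
        algebraMap R (Localization.AtPrime p.asIdeal) a • G = F)
    (f : Localization.AtPrime p.asIdeal →ₗ[R]
      (T ⧸ (Ideal.span {a} • (⊤ : Submodule R T)))) : f = 0 := by
  have hN : ∀ y : T, a • y ∈ Ideal.span {a} • (⊤ : Submodule R T) :=
    fun y => Submodule.smul_mem_smul (Ideal.mem_span_singleton_self a) trivial
  obtain ⟨F', hF'⟩ := lift_artinian (Ideal.span {a} • (⊤ : Submodule R T)).mkQ f
    (Submodule.mkQ_surjective _)
  obtain ⟨G, hGmem, hGa⟩ := hdiv (T.subtype.comp F') (fun t => (F' t).2)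
  ext t
  rw [LinearMap.zero_apply, ← hF' t]
  have h1 : a • G t = (F' t : M) := by
    have h2 := LinearMap.ext_iff.1 hGa t
    rwa [show (algebraMap R (Localization.AtPrime p.asIdeal) a • G) t
        = G (algebraMap R (Localization.AtPrime p.asIdeal) a * t) from rfl,
      ← Algebra.smul_def, G.map_smul] at h2
  have h3 : F' t = a • (⟨G t, hGmem t⟩ : T) := Subtype.ext (by simpa using h1.symm)
  rw [h3]
  exact (Submodule.Quotient.mk_eq_zero _).2 (hN _)

/-- Cosupport of such a quotient is contained in the cosupport of `M`. -/
theorem cos_of_quot (a : R) (T : Submodule R M)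
    (h : p ∈ cosupport R (T ⧸ (Ideal.span {a} • (⊤ : Submodule R T)))) :
    p ∈ cosupport R M := by
  obtain ⟨f, hf⟩ := h
  obtain ⟨F', hF'⟩ := lift_artinian (Ideal.span {a} • (⊤ : Submodule R T)).mkQ f
    (Submodule.mkQ_surjective _)
  refine ⟨T.subtype.comp F', fun h0 => hf ?_⟩
  ext t
  have h1 : (F' t : M) = 0 := LinearMap.ext_iff.1 h0 t
  have h2 : F' t = 0 := Subtype.ext (by simpa using h1)
  rw [LinearMap.zero_apply, ← hF' t, h2, map_zero]

end CoregLift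

end StatementTwoAux

open StatementTwoAux

/-- A sequence `x` is an `M`-filter co-regular sequence with respect to
`X` iff for every `p ∈ Cos_R M − X` the sequence of images `x i / 1` in `R_p` is a
`Hom_R(R_p, M)`-quasi co-regular sequence. -/
theorem statement2 (R : Type u) [CommRing R] (X : Set (PrimeSpectrum R))
    (M : Type u) [AddCommGroup M] [Module R M] [IsArtinian R M] (n : ℕ) (x : Fin n → R) :
    IsFilterCoregSeq R X M x ↔
      ∀ p ∈ cosupport R M, p ∉ X →
        IsQuasiCoregSeq (Localization.AtPrime p.asIdeal)
          (Localization.AtPrime p.asIdeal →ₗ[R] M)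
          (fun i => algebraMap R (Localization.AtPrime p.asIdeal) (x i)) := by
  classical
  constructor
  · intro hreg p _hpcos hpX i F hF
    have hset : (fun j : Fin n => algebraMap R (Localization.AtPrime p.asIdeal) (x j)) ''
          {j | j < i}
        = (fun r => algebraMap R (Localization.AtPrime p.asIdeal) r) '' (x '' {j | j < i}) := by
      rw [Set.image_image]
    rw [hset] at hF
    have hFmem := (CoregLift.mem_coloc_torsion_iff (x '' {j | j < i}) F).1 hF
    have hzero : ∀ f : Localization.AtPrime p.asIdeal →ₗ[R]
        ((Submodule.torsionBySet R M (x '' {j | j < i})) ⧸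
          (Ideal.span {x i} •
            (⊤ : Submodule R (Submodule.torsionBySet R M (x '' {j | j < i}))))), f = 0 := by
      intro f
      by_contra hf
      exact hpX (hreg i ⟨f, hf⟩)
    obtain ⟨G, hGmem, hGa⟩ := CoregLift.div_of_quot_zero p (x i) _ hzero F hFmem
    refine ⟨G, ?_, hGa⟩
    rw [hset]
    exact (CoregLift.mem_coloc_torsion_iff (x '' {j | j < i}) G).2 hGmem
  · intro hrhs i p hp
    by_contra hpX
    have hpM : p ∈ cosupport R M := CoregLift.cos_of_quot p (x i) _ hp
    have hq := hrhs p hpM hpX i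
    obtain ⟨f, hf⟩ := hp
    apply hf
    apply CoregLift.quot_zero_of_div p (x i)
    intro F hFmem
    have hset : (fun j : Fin n => algebraMap R (Localization.AtPrime p.asIdeal) (x j)) ''
          {j | j < i}
        = (fun r => algebraMap R (Localization.AtPrime p.asIdeal) r) '' (x '' {j | j < i}) := by
      rw [Set.image_image]
    have hF : F ∈ Submodule.torsionBySet (Localization.AtPrime p.asIdeal)
        (Localization.AtPrime p.asIdeal →ₗ[R] M)
        ((fun j : Fin n => algebraMap R (Localization.AtPrime p.asIdeal) (x j)) ''
          {j | j < i}) := by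
      rw [hset]
      exact (CoregLift.mem_coloc_torsion_iff (x '' {j | j < i}) F).2 hFmem
    obtain ⟨G, hGtor, hGa⟩ := hq F hF
    rw [hset] at hGtor
    exact ⟨G, (CoregLift.mem_coloc_torsion_iff (x '' {j | j < i}) G).1 hGtor, hGa⟩
end

section
/- Let R be a commutative ring, X an arbitrary subset of Spec R, and let C: ⋯ → M_{i-1} → M_i → M_{i+1} → ⋯ be a complex of Artinian R-modules. Then C is a co-exact sequence with respect to X (i.e., Cos_R(H_i(C)) ⊆ X for all i) if and only if the complex Hom_R(R_p, C), obtained by applying the functor Hom_R(R_p, −), is an exact sequence of R_p-modules for every prime p ∈ Spec R − X. -/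
open CategoryTheory

universe u

namespace Colocalize

variable {R : Type u} [CommRing R] {M : Type u} [AddCommGroup M] [Module R M]

/-- A coset of a submodule. -/
def IsCoset (B : Set M) : Prop := ∃ (x : M) (U : Submodule R M), B = {y | y - x ∈ U}

theorem IsCoset.nonempty {B : Set M} (h : IsCoset (R := R) B) : B.Nonempty := by
  obtain ⟨x, U, rfl⟩ := h
  exact ⟨x, by simp⟩

theorem coset_rep_change {B : Set M} {x : M} {U : Submodule R M}
    (hB : B = {y | y - x ∈ U}) {z : M} (hz : z ∈ B) : B = {y | y - z ∈ U} := by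
  subst hB
  ext y
  simp only [Set.mem_setOf_eq] at hz ⊢
  constructor
  · intro hy
    have := U.sub_mem hy hz
    simpa using this
  · intro hy
    have := U.add_mem hy hz
    simpa using this

theorem coset_le {B B' : Set M} {x x' : M} {U U' : Submodule R M}
    (hB : B = {y | y - x ∈ U}) (hB' : B' = {y | y - x' ∈ U'}) (hss : B ⊆ B') : U ≤ U' := by
  intro u hu
  have hx : x ∈ B := by rw [hB]; simp
  have hxu : x + u ∈ B := by rw [hB]; simpa using hu
  have h1 : x - x' ∈ U' := by have := hss hx; rwa [hB'] at this
  have h2 : x + u - x' ∈ U' := by have := hss hxu; rwa [hB'] at this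
  have := U'.sub_mem h2 h1
  simpa using this

theorem coset_eq {B B' : Set M} {x x' : M} {U U' : Submodule R M}
    (hB : B = {y | y - x ∈ U}) (hB' : B' = {y | y - x' ∈ U'}) (hss : B ⊆ B')
    (hle : U' ≤ U) : B = B' := by
  refine subset_antisymm hss ?_
  intro y hy
  have hx : x ∈ B := by rw [hB]; simp
  have h1 : x - x' ∈ U' := by have := hss hx; rwa [hB'] at this
  rw [hB'] at hy
  have : y - x ∈ U' := by
    have := U'.sub_mem hy h1
    simpa using this
  rw [hB]
  exact hle this

theorem IsCoset.smulImage {B : Set M} (t : R) (h : IsCoset (R := R) B) :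
    IsCoset (R := R) ((fun m => t • m) '' B) := by
  obtain ⟨x, U, rfl⟩ := h
  refine ⟨t • x, U.map (LinearMap.lsmul R M t), ?_⟩
  ext z
  simp only [Set.mem_image, Set.mem_setOf_eq, Submodule.mem_map, LinearMap.lsmul_apply]
  constructor
  · rintro ⟨y, hy, rfl⟩
    exact ⟨y - x, hy, by rw [smul_sub]⟩
  · rintro ⟨u, hu, hu2⟩
    refine ⟨x + u, by simpa using hu, ?_⟩
    rw [smul_add, hu2]
    abel

theorem IsCoset.inter {B C : Set M} (hB : IsCoset (R := R) B) (hC : IsCoset (R := R) C)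
    (hne : (B ∩ C).Nonempty) : IsCoset (R := R) (B ∩ C) := by
  obtain ⟨z, hzB, hzC⟩ := hne
  obtain ⟨x, U, hU⟩ := hB
  obtain ⟨x', V, hV⟩ := hC
  refine ⟨z, U ⊓ V, ?_⟩
  rw [coset_rep_change hU hzB, coset_rep_change hV hzC]
  ext y
  simp [Set.mem_inter_iff]

theorem isCoset_smul_fiber {t : R} {x m₀ : M} (h : t • m₀ = x) :
    IsCoset (R := R) {m | t • m = x} := by
  refine ⟨m₀, LinearMap.ker (LinearMap.lsmul R M t), ?_⟩
  ext y
  simp only [Set.mem_setOf_eq, LinearMap.mem_ker, LinearMap.lsmul_apply, smul_sub]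
  rw [sub_eq_zero, h]

/-- In an Artinian module, a downward directed family of cosets has a least element. -/
theorem exists_least [IsArtinian R M] (F : Set (Set M)) (hne : F.Nonempty)
    (hco : ∀ B ∈ F, IsCoset (R := R) B)
    (hdir : ∀ B ∈ F, ∀ C ∈ F, ∃ D ∈ F, D ⊆ B ∧ D ⊆ C) :
    ∃ B₀ ∈ F, ∀ B ∈ F, B₀ ⊆ B := by
  have hwf : WellFounded ((· < ·) : Submodule R M → Submodule R M → Prop) :=
    (isArtinian_iff R M).mp inferInstance
  obtain ⟨U₀, hU₀mem, hU₀min⟩ := hwf.has_min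
    {U | ∃ B ∈ F, ∃ x, B = {y | y - x ∈ U}}
    (by
      obtain ⟨B, hB⟩ := hne
      obtain ⟨x, U, h⟩ := hco B hB
      exact ⟨U, B, hB, x, h⟩)
  obtain ⟨B₁, hB₁F, x₁, hB₁⟩ := hU₀mem
  refine ⟨B₁, hB₁F, fun B hB => ?_⟩
  obtain ⟨D, hDF, hDB₁, hDB⟩ := hdir B₁ hB₁F B hB
  obtain ⟨xD, UD, hD⟩ := hco D hDF
  have hle : UD ≤ U₀ := coset_le hD hB₁ hDB₁
  have hUDmem : UD ∈ {U | ∃ B ∈ F, ∃ x, B = {y | y - x ∈ U}} := ⟨D, hDF, xD, hD⟩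
  have heq : UD = U₀ := le_antisymm hle (by
    by_contra hlt
    exact hU₀min UD hUDmem (lt_of_le_of_ne hle (fun h => hlt (h ▸ le_refl _))))
  have : D = B₁ := coset_eq hD hB₁ hDB₁ (heq ▸ le_refl _)
  rw [← this]
  exact hDB

theorem iInter_eq_of_directed [IsArtinian R M] {ι : Type u} [Nonempty ι] (G : ι → Set M)
    (hco : ∀ i, IsCoset (R := R) (G i))
    (hdir : ∀ i j, ∃ k, G k ⊆ G i ∧ G k ⊆ G j) :
    ∃ i₀, (⋂ i, G i) = G i₀ := by
  obtain ⟨B₀, hB₀, hleast⟩ := exists_least (Set.range G)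
    ⟨_, ⟨Classical.arbitrary ι, rfl⟩⟩
    (by rintro _ ⟨i, rfl⟩; exact hco i)
    (by
      rintro _ ⟨i, rfl⟩ _ ⟨j, rfl⟩
      obtain ⟨k, h1, h2⟩ := hdir i j
      exact ⟨G k, ⟨k, rfl⟩, h1, h2⟩)
  obtain ⟨i₀, rfl⟩ := hB₀
  refine ⟨i₀, subset_antisymm (Set.iInter_subset G i₀) (Set.subset_iInter fun i => hleast _ ⟨i, rfl⟩)⟩



section Fam
variable (S : Submonoid R)

theorem smul_smul_coe (u v : ↥S) (m : M) :
    (u : R) • (v : R) • m = ((u * v : ↥S) : R) • m := by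
  rw [smul_smul, Submonoid.coe_mul]

/-- slice of a subset of `S × M` -/
def sl (B : Set (↥S × M)) (s : ↥S) : Set M := {m | (s, m) ∈ B}

abbrev IsSys (A : ↥S → Set M) (B : Set (↥S × M)) : Prop :=
  (∀ s, sl S B s ⊆ A s) ∧ (∀ s, IsCoset (R := R) (sl S B s)) ∧
    (∀ s t : ↥S, (fun m => (t : R) • m) '' sl S B (t * s) ⊆ sl S B s)

theorem exists_limit_family [IsArtinian R M] (A : ↥S → Set M)
    (hA : ∀ s, IsCoset (R := R) (A s))
    (htr : ∀ s t : ↥S, (fun m => (t : R) • m) '' A (t * s) ⊆ A s) :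
    ∃ a : ↥S → M, (∀ s, a s ∈ A s) ∧ ∀ s t : ↥S, (t : R) • a (t * s) = a s := by
  classical
  -- Zorn: find a minimal system
  have hzorn : ∃ B, B ⊆ {q : ↥S × M | q.2 ∈ A q.1} ∧
      Minimal (· ∈ {B | IsSys (R := R) S A B}) B := by
    apply zorn_superset_nonempty
    · -- chains have lower bounds
      intro c hcsub hchain hcne
      obtain ⟨Bw, hBw⟩ := hcne
      haveI : Nonempty ↥c := ⟨⟨Bw, hBw⟩⟩
      refine ⟨⋂₀ c, ?_, fun B hB => Set.sInter_subset_of_mem hB⟩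
      have hslice : ∀ s, sl S (⋂₀ c) s = ⋂ B : ↥c, sl S (B : Set (↥S × M)) s := by
        intro s
        ext m
        simp only [sl, Set.mem_setOf_eq, Set.mem_sInter, Set.mem_iInter, Subtype.forall]
      have hdir : ∀ s, ∀ (i j : ↥c), ∃ k : ↥c,
          sl S (k : Set (↥S × M)) s ⊆ sl S (i : Set (↥S × M)) s ∧
          sl S (k : Set (↥S × M)) s ⊆ sl S (j : Set (↥S × M)) s := by
        intro s i j
        rcases eq_or_ne (i : Set (↥S × M)) (j : Set (↥S × M)) with h | h
        · exact ⟨i, le_refl _, by rw [h]⟩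
        · rcases hchain i.2 j.2 h with h' | h'
          · exact ⟨i, le_refl _, fun m hm => h' hm⟩
          · exact ⟨j, fun m hm => h' hm, le_refl _⟩
      have hco : ∀ s (i : ↥c), IsCoset (R := R) (sl S (i : Set (↥S × M)) s) :=
        fun s i => (hcsub i.2).2.1 s
      have hkey : ∀ s, ∃ i₀ : ↥c, sl S (⋂₀ c) s = sl S (i₀ : Set (↥S × M)) s := by
        intro s
        obtain ⟨i₀, h⟩ := iInter_eq_of_directed (fun i : ↥c => sl S (i : Set (↥S × M)) s)
          (hco s) (hdir s)
        exact ⟨i₀, by rw [hslice s, h]⟩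
      refine ⟨?_, ?_, ?_⟩
      · intro s
        obtain ⟨i₀, h⟩ := hkey s
        rw [h]
        exact (hcsub i₀.2).1 s
      · intro s
        obtain ⟨i₀, h⟩ := hkey s
        rw [h]
        exact (hcsub i₀.2).2.1 s
      · intro s t
        rintro _ ⟨m, hm, rfl⟩
        rw [hslice s]
        refine Set.mem_iInter.2 fun B => ?_
        apply (hcsub B.2).2.2 s t
        refine ⟨m, ?_, rfl⟩
        rw [hslice (t * s)] at hm
        exact Set.mem_iInter.1 hm B
    · -- the full system
      refine ⟨fun s => Set.Subset.rfl, fun s => hA s, fun s t => htr s t⟩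
  obtain ⟨B, hBsub, hBmin⟩ := hzorn
  obtain ⟨hBA, hBco, hBtr⟩ := hBmin.1
  -- helper: composite transitions
  have hcomp : ∀ (s u v : ↥S),
      (fun m => ((u * v : ↥S) : R) • m) '' sl S B ((u * v) * s) ⊆
        (fun m => (u : R) • m) '' sl S B (u * s) := by
    intro s u v
    rintro _ ⟨m, hm, rfl⟩
    have hidx : (u * v) * s = v * (u * s) := by
      simp [mul_comm, mul_assoc, mul_left_comm]
    rw [hidx] at hm
    have h2 : (v : R) • m ∈ sl S B (u * s) := hBtr (u * s) v ⟨m, hm, rfl⟩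
    exact ⟨(v : R) • m, h2, smul_smul_coe S u v m⟩
  -- S1 : surjectivity of transitions in the minimal system
  have hS1 : ∀ s t : ↥S, sl S B s ⊆ (fun m => (t : R) • m) '' sl S B (t * s) := by
    intro s t
    set B' : Set (↥S × M) :=
      {q | ∀ t : ↥S, q.2 ∈ (fun m => (t : R) • m) '' sl S B (t * q.1)} with hB'def
    have hsl' : ∀ s, sl S B' s = ⋂ t : ↥S, (fun m => (t : R) • m) '' sl S B (t * s) := by
      intro s; ext m
      simp only [sl, hB'def, Set.mem_setOf_eq, Set.mem_iInter]
    have hmem1 : ∀ s, sl S B' s ⊆ sl S B s := by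
      intro s m hm
      rw [hsl' s] at hm
      have := Set.mem_iInter.1 hm 1
      simpa [one_smul] using this
    have hdir' : ∀ s (t₁ t₂ : ↥S), ∃ t₃ : ↥S,
        (fun m => (t₃ : R) • m) '' sl S B (t₃ * s) ⊆ (fun m => (t₁ : R) • m) '' sl S B (t₁ * s) ∧
        (fun m => (t₃ : R) • m) '' sl S B (t₃ * s) ⊆ (fun m => (t₂ : R) • m) '' sl S B (t₂ * s) := by
      intro s t₁ t₂
      refine ⟨t₁ * t₂, hcomp s t₁ t₂, ?_⟩
      rw [show t₁ * t₂ = t₂ * t₁ from mul_comm t₁ t₂]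
      exact hcomp s t₂ t₁
    have hB'sys : IsSys (R := R) S A B' := by
      refine ⟨fun s => (hmem1 s).trans (hBA s), ?_, ?_⟩
      · intro s
        obtain ⟨t₀, h⟩ := iInter_eq_of_directed
          (fun t : ↥S => (fun m => (t : R) • m) '' sl S B (t * s))
          (fun t => (hBco (t * s)).smulImage _) (hdir' s)
        rw [hsl' s, h]
        exact (hBco (t₀ * s)).smulImage _
      · intro s t
        rintro _ ⟨m, hm, rfl⟩
        rw [hsl' s]
        refine Set.mem_iInter.2 fun v => ?_
        rw [hsl' (t * s)] at hm
        obtain ⟨m₀, hm₀, hm₀e⟩ := Set.mem_iInter.1 hm v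
        have hidx : v * (t * s) = t * (v * s) := by
          simp [mul_comm, mul_assoc, mul_left_comm]
        rw [hidx] at hm₀
        have h2 : (t : R) • m₀ ∈ sl S B (v * s) := hBtr (v * s) t ⟨m₀, hm₀, rfl⟩
        refine ⟨(t : R) • m₀, h2, ?_⟩
        show (v : R) • (t : R) • m₀ = (t : R) • m
        have : (v : R) • m₀ = m := hm₀e
        rw [smul_comm, this]
    have hB'B : B' ⊆ B := fun q hq => hmem1 q.1 hq
    have : B ⊆ B' := hBmin.2 hB'sys hB'B
    intro m hm
    exact (this hm : _) t
  -- S2 : the slices of the minimal system are singletons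
  have hS2 : ∀ s₀ : ↥S, ∀ x ∈ sl S B s₀, ∀ y ∈ sl S B s₀, y = x := by
    intro s₀ x hx
    set E : ↥S → Set M := fun v => sl S B (v * s₀) ∩ {m | (v : R) • m = x} with hEdef
    have hEne : ∀ v, (E v).Nonempty := by
      intro v
      obtain ⟨m, hm, hme⟩ := hS1 s₀ v hx
      exact ⟨m, hm, hme⟩
    have hEco : ∀ v, IsCoset (R := R) (E v) := by
      intro v
      obtain ⟨m₀, hm₀, hm₀e⟩ := hEne v
      exact (hBco (v * s₀)).inter (isCoset_smul_fiber hm₀e) ⟨m₀, hm₀, hm₀e⟩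
    have hEstep : ∀ (w u : ↥S), (fun m => (u : R) • m) '' E (w * u) ⊆ E w := by
      intro w u
      rintro _ ⟨m, ⟨hm1, hm2⟩, rfl⟩
      constructor
      · have hidx : (w * u) * s₀ = u * (w * s₀) := by
          simp [mul_comm, mul_assoc, mul_left_comm]
        rw [hidx] at hm1
        exact hBtr (w * s₀) u ⟨m, hm1, rfl⟩
      · show (w : R) • (u : R) • m = x
        rw [smul_smul_coe]
        exact hm2
    set D : Set (↥S × M) :=
      {q | ∀ t : ↥S, q.2 ∈ (fun m => ((t * s₀ : ↥S) : R) • m) '' E (t * q.1)} with hDdef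
    have hslD : ∀ s, sl S D s = ⋂ t : ↥S, (fun m => ((t * s₀ : ↥S) : R) • m) '' E (t * s) := by
      intro s; ext m
      simp only [sl, hDdef, Set.mem_setOf_eq, Set.mem_iInter]
    have hmemB : ∀ s (t : ↥S), (fun m => ((t * s₀ : ↥S) : R) • m) '' E (t * s) ⊆ sl S B s := by
      intro s t
      rintro _ ⟨m, ⟨hm1, _⟩, rfl⟩
      have hidx : (t * s) * s₀ = (t * s₀) * s := by
        simp [mul_comm, mul_assoc, mul_left_comm]
      rw [hidx] at hm1
      exact hBtr s (t * s₀) ⟨m, hm1, rfl⟩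
    have hdirD : ∀ s (t₁ t₂ : ↥S), ∃ t₃ : ↥S,
        (fun m => ((t₃ * s₀ : ↥S) : R) • m) '' E (t₃ * s) ⊆
          (fun m => ((t₁ * s₀ : ↥S) : R) • m) '' E (t₁ * s) ∧
        (fun m => ((t₃ * s₀ : ↥S) : R) • m) '' E (t₃ * s) ⊆
          (fun m => ((t₂ * s₀ : ↥S) : R) • m) '' E (t₂ * s) := by
      intro s t₁ t₂
      have key : ∀ (u v : ↥S),
          (fun m => (((u * v) * s₀ : ↥S) : R) • m) '' E ((u * v) * s) ⊆
            (fun m => ((u * s₀ : ↥S) : R) • m) '' E (u * s) := by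
        intro u v
        rintro _ ⟨m, hm, rfl⟩
        have hidx : (u * v) * s = (u * s) * v := by
          simp [mul_comm, mul_assoc, mul_left_comm]
        rw [hidx] at hm
        have h2 : (v : R) • m ∈ E (u * s) := hEstep (u * s) v ⟨m, hm, rfl⟩
        refine ⟨(v : R) • m, h2, ?_⟩
        show ((u * s₀ : ↥S) : R) • (v : R) • m = (((u * v) * s₀ : ↥S) : R) • m
        rw [smul_smul_coe]
        congr 1
        simp [mul_comm, mul_assoc, mul_left_comm]
      refine ⟨t₁ * t₂, key t₁ t₂, ?_⟩
      rw [show t₁ * t₂ = t₂ * t₁ from mul_comm t₁ t₂]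
      exact key t₂ t₁
    have hDsys : IsSys (R := R) S A D := by
      refine ⟨?_, ?_, ?_⟩
      · intro s m hm
        rw [hslD s] at hm
        exact hBA s (hmemB s 1 (Set.mem_iInter.1 hm 1))
      · intro s
        obtain ⟨t₀, h⟩ := iInter_eq_of_directed
          (fun t : ↥S => (fun m => ((t * s₀ : ↥S) : R) • m) '' E (t * s))
          (fun t => (hEco (t * s)).smulImage _) (hdirD s)
        rw [hslD s, h]
        exact (hEco (t₀ * s)).smulImage _
      · intro s u
        rintro _ ⟨m', hm', rfl⟩
        rw [hslD s]
        refine Set.mem_iInter.2 fun t => ?_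
        rw [hslD (u * s)] at hm'
        obtain ⟨m₀, hm₀, hm₀e⟩ := Set.mem_iInter.1 hm' t
        have hidx : t * (u * s) = (t * s) * u := by
          simp [mul_comm, mul_assoc, mul_left_comm]
        rw [hidx] at hm₀
        have h2 : (u : R) • m₀ ∈ E (t * s) := hEstep (t * s) u ⟨m₀, hm₀, rfl⟩
        refine ⟨(u : R) • m₀, h2, ?_⟩
        show ((t * s₀ : ↥S) : R) • (u : R) • m₀ = (u : R) • m'
        have he : ((t * s₀ : ↥S) : R) • m₀ = m' := hm₀e
        rw [smul_comm, he]
    have hDB : D ⊆ B := by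
      intro q hq
      have h1 := (hq : ∀ t : ↥S, q.2 ∈ (fun m => ((t * s₀ : ↥S) : R) • m) '' E (t * q.1)) 1
      exact hmemB q.1 1 h1
    have hBD : B ⊆ D := hBmin.2 hDsys hDB
    intro y hy
    have hy' := (hBD hy : ∀ t : ↥S, ((s₀, y) : ↥S × M).2 ∈
      (fun m => ((t * s₀ : ↥S) : R) • m) '' E (t * s₀)) 1
    obtain ⟨m, hm, hme⟩ := hy'
    have h1s : (1 : ↥S) * s₀ = s₀ := one_mul s₀
    rw [h1s] at hm
    have hme' : ((1 * s₀ : ↥S) : R) • m = y := hme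
    rw [h1s] at hme'
    rw [← hme']
    exact hm.2
  -- extract the family
  choose a ha using fun s => (hBco s).nonempty
  refine ⟨a, fun s => hBA s (ha s), fun s t => ?_⟩
  have h1 : (t : R) • a (t * s) ∈ sl S B s := hBtr s t ⟨a (t * s), ha (t * s), rfl⟩
  exact hS2 s (a s) (ha s) _ h1

end Fam

section CoLiftMain

theorem colift {N : Type u} [AddCommGroup N] [Module R N] (S : Submonoid R)
    [IsArtinian R M] (π : M →ₗ[R] N) (hπ : Function.Surjective π)
    (f : Localization S →ₗ[R] N) : ∃ g : Localization S →ₗ[R] M, π ∘ₗ g = f := by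
  classical
  set fs : ↥S → N := fun s => f (Localization.mk 1 s) with hfsdef
  have hmk : ∀ (r : R) (s : ↥S), r • (Localization.mk 1 s : Localization S) =
      Localization.mk r s := by
    intro r s
    rw [Localization.smul_mk, smul_eq_mul, mul_one]
  have hfs : ∀ s t : ↥S, (t : R) • fs (t * s) = fs s := by
    intro s t
    rw [hfsdef]
    simp only
    rw [← map_smul, hmk]
    congr 1
    rw [Localization.mk_eq_mk_iff, Localization.r_iff_exists]
    exact ⟨1, by push_cast; ring⟩
  set A : ↥S → Set M := fun s => π ⁻¹' {fs s} with hAdef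
  have hA : ∀ s, IsCoset (R := R) (A s) := by
    intro s
    obtain ⟨m₀, hm₀⟩ := hπ (fs s)
    refine ⟨m₀, LinearMap.ker π, ?_⟩
    ext y
    simp only [hAdef, Set.mem_preimage, Set.mem_singleton_iff, Set.mem_setOf_eq,
      LinearMap.mem_ker, map_sub, sub_eq_zero, hm₀]
  have htr : ∀ s t : ↥S, (fun m => (t : R) • m) '' A (t * s) ⊆ A s := by
    intro s t
    rintro _ ⟨m, hm, rfl⟩
    have hm' : π m = fs (t * s) := hm
    show π ((t : R) • m) = fs s
    rw [map_smul, hm', hfs s t]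
  obtain ⟨a, ha, hcompat⟩ := exists_limit_family S A hA htr
  have hπa : ∀ s, π (a s) = fs s := fun s => ha s
  have hwd : ∀ {r₁ : R} {s₁ : ↥S} {r₂ : R} {s₂ : ↥S},
      Localization.r S (r₁, s₁) (r₂, s₂) → r₁ • a s₁ = r₂ • a s₂ := by
    intro r₁ s₁ r₂ s₂ h
    obtain ⟨c, hc⟩ := Localization.r_iff_exists.mp h
    simp only at hc
    have h1 : a s₁ = ((c * s₂ : ↥S) : R) • a ((c * s₂) * s₁) := (hcompat s₁ (c * s₂)).symm
    have h2 : a s₂ = ((c * s₁ : ↥S) : R) • a ((c * s₁) * s₂) := (hcompat s₂ (c * s₁)).symm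
    have hidx : (c * s₂) * s₁ = (c * s₁) * s₂ := by
      simp [mul_comm, mul_assoc, mul_left_comm]
    rw [h1, h2, hidx, smul_smul, smul_smul]
    congr 1
    push_cast
    linear_combination hc
  set G : Localization S → M := fun z => Localization.liftOn z (fun r s => r • a s)
    (fun h => hwd h) with hGdef
  have hGmk : ∀ (r : R) (s : ↥S), G (Localization.mk r s) = r • a s := by
    intro r s
    rw [hGdef]
    exact Localization.liftOn_mk _ _ _ _
  refine ⟨{ toFun := G, map_add' := ?_, map_smul' := ?_ }, ?_⟩
  · intro z₁ z₂
    induction z₁ using Localization.induction_on with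
    | H d₁ =>
      induction z₂ using Localization.induction_on with
      | H d₂ =>
        obtain ⟨r₁, s₁⟩ := d₁
        obtain ⟨r₂, s₂⟩ := d₂
        rw [Localization.add_mk, hGmk, hGmk, hGmk]
        have h1 : a s₁ = ((s₂ : R)) • a (s₂ * s₁) := (hcompat s₁ s₂).symm
        have h2 : a s₂ = ((s₁ : R)) • a (s₁ * s₂) := (hcompat s₂ s₁).symm
        have hidx : s₂ * s₁ = s₁ * s₂ := mul_comm s₂ s₁
        rw [h1, h2, hidx, smul_smul, smul_smul, ← add_smul]
        congr 1
        push_cast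
        ring
  · intro r z
    induction z using Localization.induction_on with
    | H d =>
      obtain ⟨r₁, s₁⟩ := d
      simp only [RingHom.id_apply]
      rw [Localization.smul_mk, hGmk, smul_eq_mul, hGmk, mul_smul]
  · apply LinearMap.ext
    intro z
    induction z using Localization.induction_on with
    | H d =>
      obtain ⟨r₁, s₁⟩ := d
      simp only [LinearMap.comp_apply]
      show π (G (Localization.mk r₁ s₁)) = f (Localization.mk r₁ s₁)
      rw [hGmk, map_smul, hπa, hfsdef]
      simp only
      rw [← map_smul, hmk]

end CoLiftMain

end Colocalize


/-- A complex of Artinian `R`-modules is co-exact with respect to `X`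
(all homology has co-support inside `X`) iff the co-localized complex `Hom_R(R_p, C)` is
exact for every prime `p ∉ X`. -/
theorem statement3 (R : Type u) [CommRing R] (X : Set (PrimeSpectrum R))
    (Mod : ℤ → Type u) [∀ i, AddCommGroup (Mod i)] [∀ i, Module R (Mod i)]
    [∀ i, IsArtinian R (Mod i)]
    (d : ∀ i : ℤ, Mod i →ₗ[R] Mod (i + 1))
    (hd : ∀ i : ℤ, (d (i + 1)).comp (d i) = 0) :
    (∀ i : ℤ, cosupport R
        ((LinearMap.ker (d (i + 1))) ⧸
          ((LinearMap.range (d i)).comap (LinearMap.ker (d (i + 1))).subtype)) ⊆ X) ↔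
      ∀ p : PrimeSpectrum R, p ∉ X → ∀ i : ℤ,
        Function.Exact
          (fun g : Localization.AtPrime p.asIdeal →ₗ[R] Mod i => (d i).comp g)
          (fun g : Localization.AtPrime p.asIdeal →ₗ[R] Mod (i + 1) => (d (i + 1)).comp g) := by
  constructor
  · intro hcos p hp i
    intro g
    constructor
    · intro hg0
      -- g lands in the kernel of d (i+1)
      have hker : ∀ x, g x ∈ LinearMap.ker (d (i + 1)) := by
        intro x
        rw [LinearMap.mem_ker]
        exact LinearMap.congr_fun hg0 x
      set K := LinearMap.ker (d (i + 1)) with hK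
      set Bc := (LinearMap.range (d i)).comap K.subtype with hBc
      set gbar := LinearMap.codRestrict K g hker with hgbar
      have hq : Bc.mkQ ∘ₗ gbar = 0 := by
        by_contra hne
        exact hp (hcos i ⟨Bc.mkQ ∘ₗ gbar, hne⟩)
      have hmem : ∀ x, g x ∈ LinearMap.range (d i) := by
        intro x
        have h1 : Bc.mkQ (gbar x) = 0 := LinearMap.congr_fun hq x
        have h2 : gbar x ∈ Bc := (Submodule.Quotient.mk_eq_zero Bc).mp h1
        exact h2
      set g' := LinearMap.codRestrict (LinearMap.range (d i)) g hmem with hg'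
      obtain ⟨h, hh⟩ := Colocalize.colift p.asIdeal.primeCompl (d i).rangeRestrict
        (d i).surjective_rangeRestrict g'
      refine ⟨h, ?_⟩
      apply LinearMap.ext
      intro x
      have := LinearMap.congr_fun hh x
      have h2 := congrArg Subtype.val this
      exact h2
    · rintro ⟨h, rfl⟩
      show d (i + 1) ∘ₗ (d i ∘ₗ h) = 0
      rw [← LinearMap.comp_assoc, hd i, LinearMap.zero_comp]
  · intro hex i
    intro p hpcos
    by_contra hpX
    set K := LinearMap.ker (d (i + 1)) with hK
    set Bc := (LinearMap.range (d i)).comap K.subtype with hBc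
    obtain ⟨f, hf⟩ := hpcos
    obtain ⟨ghat, hghat⟩ := Colocalize.colift p.asIdeal.primeCompl Bc.mkQ
      (Submodule.mkQ_surjective Bc) f
    have h1 : (d (i + 1)) ∘ₗ (K.subtype ∘ₗ ghat) = 0 := by
      apply LinearMap.ext
      intro x
      simp only [LinearMap.comp_apply, LinearMap.zero_apply]
      exact (ghat x).2
    obtain ⟨h, hh⟩ := ((hex p hpX i) (K.subtype ∘ₗ ghat)).mp h1
    have hmem : ∀ x, ghat x ∈ Bc := by
      intro x
      show (ghat x : Mod (i + 1)) ∈ LinearMap.range (d i)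
      have h4 : (K.subtype ∘ₗ ghat) x = (d i) (h x) := (LinearMap.congr_fun hh x).symm
      rw [LinearMap.comp_apply] at h4
      have h5 : (ghat x : Mod (i + 1)) = (d i) (h x) := h4
      rw [h5]
      exact ⟨h x, rfl⟩
    apply hf
    apply LinearMap.ext
    intro x
    have : f x = Bc.mkQ (ghat x) := (LinearMap.congr_fun hghat x).symm
    rw [this, LinearMap.zero_apply]
    exact (Submodule.Quotient.mk_eq_zero Bc).mpr (hmem x)
end
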